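/- arXiv:0909.1932 — 4 statements merged into one kernel-verified Lean document; each statement's English description precedes it below -/
import Mathlib

section
/- For every real y ≥ 0 and every integer n ≥ 2, 𝒫_n(y)² + 𝒫_n(−y)² ≤ (2n² + 4(n−1)(3n−2)y²) / n^n. -/
open Real Set Filter Topology

noncomputable section

/-- `𝒫_n(y) = (√(1+y²)+y)^{n-1} / (1+(n-1)(√(1+y²)+y)²)^{(n-2)/2}`. -/
def P (n : ℕ) (y : ℝ) : ℝ :=
  (Real.sqrt (1 + y ^ 2) + y) ^ (n - 1) /
    (1 + ((n : ℝ) - 1) * (Real.sqrt (1 + y ^ 2) + y) ^ 2) ^ (((n : ℝ) - 2) / 2)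

def aA (k : ℕ) (t : ℝ) : ℝ := t^(k+1) * (((k:ℝ)+2) + ((k:ℝ)+1)*t) / (1 + ((k:ℝ)+1)*t)^(k+2)
def aB (k : ℕ) (t : ℝ) : ℝ := ((k:ℝ)+1) / (t + ((k:ℝ)+1))^(k+2)
def aS (k : ℕ) (t : ℝ) : ℝ := (3*(k:ℝ)+4)/((k:ℝ)+2)^(k+2) - aA k t - aB k t
def aPsi (k : ℕ) (t : ℝ) : ℝ :=
  (3*(k:ℝ)+4)*(t-1)/((k:ℝ)+2)^(k+2) + 1/(t+((k:ℝ)+1))^(k+1) - t^(k+2)/(1+((k:ℝ)+1)*t)^(k+1)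
def aPhi (k : ℕ) (t : ℝ) : ℝ :=
  2*((k:ℝ)+2)^2/((k:ℝ)+2)^(k+2) + ((k:ℝ)+1)*(3*(k:ℝ)+4)*(t-1)^2/(t*((k:ℝ)+2)^(k+2))
    - t^(k+1)/(1+((k:ℝ)+1)*t)^k - 1/(t*(t+((k:ℝ)+1))^k)

-- positivity helpers
lemma den1_pos (k : ℕ) {t : ℝ} (ht : 0 < t) : 0 < 1 + ((k:ℝ)+1)*t := by positivity
lemma den2_pos (k : ℕ) {t : ℝ} (ht : 0 < t) : 0 < t + ((k:ℝ)+1) := by positivity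

lemma hd_aPsi (k : ℕ) {t : ℝ} (ht : 0 < t) : HasDerivAt (aPsi k) (aS k t) t := by
  have h1 : (0:ℝ) < 1 + ((k:ℝ)+1)*t := den1_pos k ht
  have h2 : (0:ℝ) < t + ((k:ℝ)+1) := den2_pos k ht
  have hd2 : HasDerivAt (fun t : ℝ => (t+((k:ℝ)+1))^(k+1))
      ((k+1)*(t+((k:ℝ)+1))^k) t := by
    have := ((hasDerivAt_id t).add_const ((k:ℝ)+1)).fun_pow (k+1)
    simpa using this
  have hd1 : HasDerivAt (fun t : ℝ => (1+((k:ℝ)+1)*t)^(k+1))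
      ((k+1)*(1+((k:ℝ)+1)*t)^k * ((k:ℝ)+1)) t := by
    have h := (((hasDerivAt_id t).const_mul ((k:ℝ)+1)).const_add 1).fun_pow (k+1)
    simpa [mul_comm] using h
  have hdnum : HasDerivAt (fun t : ℝ => t^(k+2)) ((k+2)*t^(k+1)) t := by
    simpa using hasDerivAt_pow (k+2) t
  have hA : HasDerivAt (fun t : ℝ => (3*(k:ℝ)+4)*(t-1)/((k:ℝ)+2)^(k+2))
      ((3*(k:ℝ)+4)/((k:ℝ)+2)^(k+2)) t := by
    have h := (((hasDerivAt_id t).sub_const 1).const_mul (3*(k:ℝ)+4)).div_const (((k:ℝ)+2)^(k+2))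
    simpa using h
  have hB : HasDerivAt (fun t : ℝ => 1/(t+((k:ℝ)+1))^(k+1))
      ((0 * (t+((k:ℝ)+1))^(k+1) - 1 * ((k+1)*(t+((k:ℝ)+1))^k)) / ((t+((k:ℝ)+1))^(k+1))^2) t :=
    (hasDerivAt_const t 1).div hd2 (by positivity)
  have hC : HasDerivAt (fun t : ℝ => t^(k+2)/(1+((k:ℝ)+1)*t)^(k+1))
      (((k+2)*t^(k+1) * (1+((k:ℝ)+1)*t)^(k+1) - t^(k+2) * ((k+1)*(1+((k:ℝ)+1)*t)^k * ((k:ℝ)+1)))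
        / ((1+((k:ℝ)+1)*t)^(k+1))^2) t :=
    hdnum.div hd1 (by positivity)
  have := (hA.add hB).sub hC
  convert this using 1 <;> try rfl
  have e1 : (1 + ((k:ℝ)+1)*t) ≠ 0 := ne_of_gt h1
  have e2 : (t + ((k:ℝ)+1)) ≠ 0 := ne_of_gt h2
  have e3 : ((k:ℝ)+2)^(k+2) ≠ 0 := by positivity
  unfold aS aA aB
  field_simp
  ring

def aRho (k : ℕ) (t : ℝ) : ℝ := t^(k+1)*(t+((k:ℝ)+1))^(k+3)/(t*(1+((k:ℝ)+1)*t)^(k+3))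

lemma hd_aPhi (k : ℕ) {t : ℝ} (ht : 0 < t) :
    HasDerivAt (aPhi k) (((k:ℝ)+1)*(t+1)/t^2 * aPsi k t) t := by
  have h1 : (0:ℝ) < 1 + ((k:ℝ)+1)*t := den1_pos k ht
  have h2 : (0:ℝ) < t + ((k:ℝ)+1) := den2_pos k ht
  have hd1 : HasDerivAt (fun t : ℝ => (1+((k:ℝ)+1)*t)^k) ((k:ℝ)*(1+((k:ℝ)+1)*t)^(k-1) * ((k:ℝ)+1)) t := by
    have h := (((hasDerivAt_id t).const_mul ((k:ℝ)+1)).const_add 1).fun_pow k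
    simpa [mul_comm] using h
  have hd2 : HasDerivAt (fun t : ℝ => t*(t+((k:ℝ)+1))^k)
      (1*(t+((k:ℝ)+1))^k + t*((k:ℝ)*(t+((k:ℝ)+1))^(k-1)*1)) t := by
    have ha : HasDerivAt (fun t : ℝ => (t+((k:ℝ)+1))^k) ((k:ℝ)*(t+((k:ℝ)+1))^(k-1)*1) t :=
      ((hasDerivAt_id t).add_const ((k:ℝ)+1)).fun_pow k
    exact (hasDerivAt_id t).mul ha
  have hdnum : HasDerivAt (fun t : ℝ => t^(k+1)) ((k+1)*t^k) t := by
    simpa using hasDerivAt_pow (k+1) t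
  have hterm2 : HasDerivAt (fun t : ℝ => ((k:ℝ)+1)*(3*(k:ℝ)+4)*(t-1)^2/(t*((k:ℝ)+2)^(k+2)))
      ((((k:ℝ)+1)*(3*(k:ℝ)+4)*(2*(t-1)) * (t*((k:ℝ)+2)^(k+2)) -
        ((k:ℝ)+1)*(3*(k:ℝ)+4)*(t-1)^2 * (1*((k:ℝ)+2)^(k+2))) / (t*((k:ℝ)+2)^(k+2))^2) t := by
    have hnum : HasDerivAt (fun t : ℝ => ((k:ℝ)+1)*(3*(k:ℝ)+4)*(t-1)^2)
        (((k:ℝ)+1)*(3*(k:ℝ)+4)*(2*(t-1))) t := by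
      have h := (((hasDerivAt_id t).sub_const 1).fun_pow 2).const_mul (((k:ℝ)+1)*(3*(k:ℝ)+4))
      simp only [id_eq] at h
      convert h using 1 <;> first | rfl | (push_cast; ring)
    have hden : HasDerivAt (fun t : ℝ => t*((k:ℝ)+2)^(k+2)) (1*((k:ℝ)+2)^(k+2)) t := by
      simpa using (hasDerivAt_id t).mul_const (((k:ℝ)+2)^(k+2))
    exact hnum.div hden (by positivity)
  have hterm3 : HasDerivAt (fun t : ℝ => t^(k+1)/(1+((k:ℝ)+1)*t)^k)
      (((k+1)*t^k * (1+((k:ℝ)+1)*t)^k - t^(k+1) * ((k:ℝ)*(1+((k:ℝ)+1)*t)^(k-1) * ((k:ℝ)+1)))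
        / ((1+((k:ℝ)+1)*t)^k)^2) t := hdnum.div hd1 (by positivity)
  have hterm4 : HasDerivAt (fun t : ℝ => 1/(t*(t+((k:ℝ)+1))^k))
      ((0 * (t*(t+((k:ℝ)+1))^k) - 1 * (1*(t+((k:ℝ)+1))^k + t*((k:ℝ)*(t+((k:ℝ)+1))^(k-1)*1)))
        / (t*(t+((k:ℝ)+1))^k)^2) t :=
    (hasDerivAt_const t 1).div hd2 (by positivity)
  have hfull := ((((hasDerivAt_const t (2*((k:ℝ)+2)^2/((k:ℝ)+2)^(k+2))).add hterm2).sub hterm3).sub hterm4)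
  convert hfull using 1 <;> try rfl
  have e1 : (1 + ((k:ℝ)+1)*t) ≠ 0 := ne_of_gt h1
  have e2 : (t + ((k:ℝ)+1)) ≠ 0 := ne_of_gt h2
  have e3 : ((k:ℝ)+2) ≠ 0 := by positivity
  have e4 : t ≠ 0 := ne_of_gt ht
  unfold aPsi
  rcases k with _|m
  · norm_num; field_simp; ring
  · have hk1 : (m+1) - 1 = m := rfl
    rw [hk1]
    push_cast
    field_simp
    ring

lemma hd_aS (k : ℕ) {t : ℝ} (ht : 0 < t) :
    HasDerivAt (aS k)
      (((k:ℝ)+2)*((k:ℝ)+1) * ((1+((k:ℝ)+1)*t)^(k+3) - t^k*(t+((k:ℝ)+1))^(k+3))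
        / ((t+((k:ℝ)+1))^(k+3)*(1+((k:ℝ)+1)*t)^(k+3))) t := by
  have h1 : (0:ℝ) < 1 + ((k:ℝ)+1)*t := den1_pos k ht
  have h2 : (0:ℝ) < t + ((k:ℝ)+1) := den2_pos k ht
  have hdenA : HasDerivAt (fun t : ℝ => (1+((k:ℝ)+1)*t)^(k+2))
      ((k+2)*(1+((k:ℝ)+1)*t)^(k+1) * ((k:ℝ)+1)) t := by
    have h := (((hasDerivAt_id t).const_mul ((k:ℝ)+1)).const_add 1).fun_pow (k+2)
    simpa [mul_comm] using h
  have hnumA : HasDerivAt (fun t : ℝ => t^(k+1) * (((k:ℝ)+2) + ((k:ℝ)+1)*t))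
      (((k:ℝ)+1)*t^k * (((k:ℝ)+2) + ((k:ℝ)+1)*t) + t^(k+1) * ((k:ℝ)+1)) t := by
    have ha : HasDerivAt (fun t : ℝ => t^(k+1)) ((k+1)*t^k) t := by
      simpa using hasDerivAt_pow (k+1) t
    have hb : HasDerivAt (fun t : ℝ => ((k:ℝ)+2) + ((k:ℝ)+1)*t) ((k:ℝ)+1) t := by
      simpa using ((hasDerivAt_id t).const_mul ((k:ℝ)+1)).const_add ((k:ℝ)+2)
    have := ha.mul hb
    convert this using 1 <;> first | rfl | (push_cast; ring)
  have hA : HasDerivAt (aA k)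
      (((((k:ℝ)+1)*t^k * (((k:ℝ)+2) + ((k:ℝ)+1)*t) + t^(k+1) * ((k:ℝ)+1)) * (1+((k:ℝ)+1)*t)^(k+2)
        - t^(k+1) * (((k:ℝ)+2) + ((k:ℝ)+1)*t) * ((k+2)*(1+((k:ℝ)+1)*t)^(k+1) * ((k:ℝ)+1)))
        / ((1+((k:ℝ)+1)*t)^(k+2))^2) t := hnumA.div hdenA (by positivity)
  have hdenB : HasDerivAt (fun t : ℝ => (t+((k:ℝ)+1))^(k+2))
      ((k+2)*(t+((k:ℝ)+1))^(k+1)) t := by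
    have := ((hasDerivAt_id t).add_const ((k:ℝ)+1)).fun_pow (k+2)
    simpa using this
  have hB : HasDerivAt (aB k)
      ((0 * (t+((k:ℝ)+1))^(k+2) - ((k:ℝ)+1) * ((k+2)*(t+((k:ℝ)+1))^(k+1))) / ((t+((k:ℝ)+1))^(k+2))^2) t :=
    (hasDerivAt_const t ((k:ℝ)+1)).div hdenB (by positivity)
  have hfull := ((hasDerivAt_const t ((3*(k:ℝ)+4)/((k:ℝ)+2)^(k+2))).sub hA).sub hB
  have heq : aS k = fun t => (3*(k:ℝ)+4)/((k:ℝ)+2)^(k+2) - aA k t - aB k t := rfl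
  rw [heq]
  convert hfull using 1 <;> try rfl
  have e1 : (1 + ((k:ℝ)+1)*t) ≠ 0 := ne_of_gt h1
  have e2 : (t + ((k:ℝ)+1)) ≠ 0 := ne_of_gt h2
  field_simp
  ring

lemma hd_aRho (k : ℕ) {t : ℝ} (ht : 0 < t) :
    HasDerivAt (aRho k)
      ((k:ℝ)*(((k:ℝ)+1)*t^2 - (3*(k:ℝ)+4)*t + (((k:ℝ)+1)))
        * (t^(k+1)*(t+((k:ℝ)+1))^(k+2)*(1+((k:ℝ)+1)*t)^(k+2))
        / (t*(1+((k:ℝ)+1)*t)^(k+3))^2) t := by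
  have h1 : (0:ℝ) < 1 + ((k:ℝ)+1)*t := den1_pos k ht
  have h2 : (0:ℝ) < t + ((k:ℝ)+1) := den2_pos k ht
  have hnum : HasDerivAt (fun t : ℝ => t^(k+1)*(t+((k:ℝ)+1))^(k+3))
      (((k:ℝ)+1)*t^k*(t+((k:ℝ)+1))^(k+3) + t^(k+1)*(((k:ℝ)+3)*(t+((k:ℝ)+1))^(k+2))) t := by
    have ha : HasDerivAt (fun t : ℝ => t^(k+1)) ((k+1)*t^k) t := by
      simpa using hasDerivAt_pow (k+1) t
    have hb : HasDerivAt (fun t : ℝ => (t+((k:ℝ)+1))^(k+3)) ((k+3)*(t+((k:ℝ)+1))^(k+2)) t := by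
      simpa using ((hasDerivAt_id t).add_const ((k:ℝ)+1)).fun_pow (k+3)
    have := ha.mul hb
    convert this using 1 <;> first | rfl | (push_cast; ring)
  have hden : HasDerivAt (fun t : ℝ => t*(1+((k:ℝ)+1)*t)^(k+3))
      (1*(1+((k:ℝ)+1)*t)^(k+3) + t*(((k:ℝ)+3)*(1+((k:ℝ)+1)*t)^(k+2)*((k:ℝ)+1))) t := by
    have hb : HasDerivAt (fun t : ℝ => (1+((k:ℝ)+1)*t)^(k+3))
        ((k+3)*(1+((k:ℝ)+1)*t)^(k+2)*((k:ℝ)+1)) t := by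
      have h := (((hasDerivAt_id t).const_mul ((k:ℝ)+1)).const_add 1).fun_pow (k+3)
      simpa [mul_comm] using h
    have := (hasDerivAt_id t).mul hb
    convert this using 1 <;> first | rfl | (push_cast; ring)
  have hfull := hnum.div hden (by positivity)
  convert hfull using 1 <;> try rfl
  have e1 : (1 + ((k:ℝ)+1)*t) ≠ 0 := ne_of_gt h1
  have e2 : (t + ((k:ℝ)+1)) ≠ 0 := ne_of_gt h2
  have e4 : t ≠ 0 := ne_of_gt ht
  field_simp
  ring

def aR2 (k : ℕ) : ℝ := ((3*(k:ℝ)+4) + Real.sqrt (((k:ℝ)+2)*(5*(k:ℝ)+6)))/(2*((k:ℝ)+1))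

lemma aR2_ge_one (k : ℕ) : 1 ≤ aR2 k := by
  have hs : 0 ≤ Real.sqrt (((k:ℝ)+2)*(5*(k:ℝ)+6)) := Real.sqrt_nonneg _
  rw [aR2, le_div_iff₀ (by positivity)]
  linarith

lemma aR2_gt_one (k : ℕ) : 1 < aR2 k := by
  have hs : 0 ≤ Real.sqrt (((k:ℝ)+2)*(5*(k:ℝ)+6)) := Real.sqrt_nonneg _
  rw [aR2, lt_div_iff₀ (by positivity)]
  linarith

lemma aR2_root (k : ℕ) :
    ((k:ℝ)+1)*(aR2 k)^2 - (3*(k:ℝ)+4)*(aR2 k) + ((k:ℝ)+1) = 0 := by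
  have hs : Real.sqrt (((k:ℝ)+2)*(5*(k:ℝ)+6)) ^ 2 = ((k:ℝ)+2)*(5*(k:ℝ)+6) :=
    Real.sq_sqrt (by positivity)
  set s := Real.sqrt (((k:ℝ)+2)*(5*(k:ℝ)+6)) with hsdef
  have h0 : (2*((k:ℝ)+1)) ≠ 0 := by positivity
  rw [aR2, ← hsdef]
  field_simp
  linear_combination hs

lemma aR2_eq (k : ℕ) :
    2*((k:ℝ)+1)*(aR2 k) = (3*(k:ℝ)+4) + Real.sqrt (((k:ℝ)+2)*(5*(k:ℝ)+6)) := by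
  rw [aR2]
  field_simp

lemma Q_nonpos (k : ℕ) {t : ℝ} (h1 : 1 ≤ t) (h2 : t ≤ aR2 k) :
    ((k:ℝ)+1)*t^2 - (3*(k:ℝ)+4)*t + ((k:ℝ)+1) ≤ 0 := by
  have hr := aR2_root k
  have hr1 := aR2_gt_one k
  have key : (aR2 k - 1) * (((k:ℝ)+1)*t^2 - (3*(k:ℝ)+4)*t + ((k:ℝ)+1))
      = (t-1)*(((k:ℝ)+1)*(aR2 k)^2 - (3*(k:ℝ)+4)*(aR2 k) + ((k:ℝ)+1))
        - ((k:ℝ)+2)*(aR2 k - t) - ((k:ℝ)+1)*(t-1)*(aR2 k - t)*(aR2 k - 1) := by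
    ring
  rw [hr] at key
  have h3 : (0:ℝ) ≤ ((k:ℝ)+1)*(t-1)*(aR2 k - t)*(aR2 k - 1) := by
    have := sub_nonneg.2 h1
    have := sub_nonneg.2 h2
    have : (0:ℝ) ≤ aR2 k - 1 := by linarith
    positivity
  have h4 : (0:ℝ) ≤ ((k:ℝ)+2)*(aR2 k - t) := by
    have := sub_nonneg.2 h2
    positivity
  have h5 : (aR2 k - 1) * (((k:ℝ)+1)*t^2 - (3*(k:ℝ)+4)*t + ((k:ℝ)+1)) ≤ 0 := by
    rw [key]; linarith
  have h6 : (0:ℝ) < aR2 k - 1 := by linarith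
  exact nonpos_of_mul_nonpos_right (by linarith [h5]) h6

lemma Q_nonneg (k : ℕ) {t : ℝ} (h2 : aR2 k ≤ t) :
    0 ≤ ((k:ℝ)+1)*t^2 - (3*(k:ℝ)+4)*t + ((k:ℝ)+1) := by
  have hr := aR2_root k
  have hs : 0 ≤ Real.sqrt (((k:ℝ)+2)*(5*(k:ℝ)+6)) := Real.sqrt_nonneg _
  have h2r := aR2_eq k
  have hfac : (0:ℝ) ≤ ((k:ℝ)+1)*(t+aR2 k) - (3*(k:ℝ)+4) := by nlinarith
  have h3 : (0:ℝ) ≤ (t - aR2 k)*(((k:ℝ)+1)*(t+aR2 k) - (3*(k:ℝ)+4)) :=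
    mul_nonneg (sub_nonneg.2 h2) hfac
  nlinarith [hr, h3]

lemma aRho_one (k : ℕ) : aRho k 1 = 1 := by
  rw [aRho]
  rw [show (1:ℝ) + ((k:ℝ)+1)*1 = 1 + ((k:ℝ)+1) by ring]
  rw [one_pow]
  exact div_self (by positivity)

lemma aRho_anti (k : ℕ) : AntitoneOn (aRho k) (Icc 1 (aR2 k)) := by
  have hc : ContinuousOn (aRho k) (Icc 1 (aR2 k)) := fun x hx =>
    ((hd_aRho k (by linarith [hx.1] : (0:ℝ) < x)).continuousAt).continuousWithinAt
  apply antitoneOn_of_deriv_nonpos (convex_Icc _ _) hc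
  · intro x hx
    rw [interior_Icc] at hx
    exact ((hd_aRho k (by linarith [hx.1] : (0:ℝ) < x)).differentiableAt).differentiableWithinAt
  · intro x hx
    rw [interior_Icc] at hx
    have hx0 : (0:ℝ) < x := by linarith [hx.1]
    rw [(hd_aRho k hx0).deriv]
    have hQ : ((k:ℝ)+1)*x^2 - (3*(k:ℝ)+4)*x + ((k:ℝ)+1) ≤ 0 := Q_nonpos k hx.1.le hx.2.le
    have hp : (0:ℝ) ≤ x^(k+1)*(x+((k:ℝ)+1))^(k+2)*(1+((k:ℝ)+1)*x)^(k+2) := by positivity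
    have hd : (0:ℝ) < (x*(1+((k:ℝ)+1)*x)^(k+3))^2 := by positivity
    apply div_nonpos_of_nonpos_of_nonneg _ hd.le
    have : (0:ℝ) ≤ (k:ℝ) := Nat.cast_nonneg k
    nlinarith [mul_nonneg this hp]

lemma aRho_mono (k : ℕ) : MonotoneOn (aRho k) (Ici (aR2 k)) := by
  have h1 := aR2_ge_one k
  have hc : ContinuousOn (aRho k) (Ici (aR2 k)) := fun x hx =>
    ((hd_aRho k (by simp only [mem_Ici] at hx; linarith : (0:ℝ) < x)).continuousAt).continuousWithinAt
  apply monotoneOn_of_deriv_nonneg (convex_Ici _) hc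
  · intro x hx
    rw [interior_Ici] at hx
    exact ((hd_aRho k (by simp only [mem_Ioi] at hx; linarith : (0:ℝ) < x)).differentiableAt).differentiableWithinAt
  · intro x hx
    rw [interior_Ici] at hx
    simp only [mem_Ioi] at hx
    have hx0 : (0:ℝ) < x := by linarith
    rw [(hd_aRho k hx0).deriv]
    have hQ := Q_nonneg k hx.le
    have hp : (0:ℝ) ≤ x^(k+1)*(x+((k:ℝ)+1))^(k+2)*(1+((k:ℝ)+1)*x)^(k+2) := by positivity
    have : (0:ℝ) ≤ (k:ℝ) := Nat.cast_nonneg k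
    positivity

lemma pow_bound (k : ℕ) : ((k:ℝ)+2)^(k+2) ≤ (3*(k:ℝ)+4)*((k:ℝ)+1)^(k+1) := by
  rcases le_or_gt k 5 with hk | hk
  · interval_cases k <;> norm_num
  · have hk6 : (6:ℝ) ≤ (k:ℝ) := by exact_mod_cast (by omega : 6 ≤ k)
    have hc : (0:ℝ) < (k:ℝ)+1 := by positivity
    have h3 : 1 + 1/((k:ℝ)+1) ≤ Real.exp (1/((k:ℝ)+1)) := by
      have := Real.add_one_le_exp (1/((k:ℝ)+1)); linarith
    have h2 : (1 + 1/((k:ℝ)+1))^(k+1) ≤ Real.exp 1 := by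
      calc (1 + 1/((k:ℝ)+1))^(k+1) ≤ (Real.exp (1/((k:ℝ)+1)))^(k+1) :=
            pow_le_pow_left₀ (by positivity) h3 _
        _ = Real.exp ((k+1 : ℕ) * (1/((k:ℝ)+1))) := by rw [Real.exp_nat_mul]
        _ = Real.exp 1 := by
            rw [show ((k+1 : ℕ) : ℝ) * (1/((k:ℝ)+1)) = 1 by push_cast; field_simp]
    have h1 : ((k:ℝ)+2) = ((k:ℝ)+1)*(1 + 1/((k:ℝ)+1)) := by field_simp; ring
    have h4 : ((k:ℝ)+2)^(k+1) = ((k:ℝ)+1)^(k+1) * (1 + 1/((k:ℝ)+1))^(k+1) := by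
      rw [h1, mul_pow]
    have he : Real.exp 1 < 2.7182818286 := Real.exp_one_lt_d9
    have h5 : ((k:ℝ)+2)^(k+2) = ((k:ℝ)+2) * ((k:ℝ)+2)^(k+1) := by ring
    rw [h5, h4]
    have h6 : ((k:ℝ)+2) * (((k:ℝ)+1)^(k+1) * (1 + 1/((k:ℝ)+1))^(k+1))
        ≤ ((k:ℝ)+2) * (((k:ℝ)+1)^(k+1) * Real.exp 1) := by
      apply mul_le_mul_of_nonneg_left _ (by positivity)
      exact mul_le_mul_of_nonneg_left h2 (by positivity)
    refine h6.trans ?_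
    have hp : (0:ℝ) ≤ ((k:ℝ)+1)^(k+1) := by positivity
    have h7 : ((k:ℝ)+2)*Real.exp 1 ≤ 3*(k:ℝ)+4 := by nlinarith [Real.exp_pos 1]
    nlinarith [mul_le_mul_of_nonneg_right h7 hp]

lemma aS_one (k : ℕ) : aS k 1 = 0 := by
  rw [aS, aA, aB]
  rw [show (1:ℝ) + ((k:ℝ)+1)*1 = (k:ℝ)+2 by ring, show (1:ℝ) + ((k:ℝ)+1) = (k:ℝ)+2 by ring]
  have h2 : ((k:ℝ)+2) ≠ 0 := by positivity
  field_simp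
  ring

lemma aS_tendsto (k : ℕ) :
    Tendsto (aS k) atTop
      (𝓝 ((3*(k:ℝ)+4)/((k:ℝ)+2)^(k+2) - 1/((k:ℝ)+1)^(k+1))) := by
  have hA : Tendsto (aA k) atTop (𝓝 (1/((k:ℝ)+1)^(k+1))) := by
    have h1 : Tendsto (fun t : ℝ => (((k:ℝ)+2)*t⁻¹ + ((k:ℝ)+1)) / ((t⁻¹ + ((k:ℝ)+1))^(k+2)))
        atTop (𝓝 ((((k:ℝ)+2)*0 + ((k:ℝ)+1)) / ((0 + ((k:ℝ)+1))^(k+2)))) := by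
      apply Tendsto.div
      · exact (tendsto_inv_atTop_zero.const_mul _).add_const _
      · exact (tendsto_inv_atTop_zero.add_const _).pow (k+2)
      · positivity
    have h2 : (((k:ℝ)+2)*0 + ((k:ℝ)+1)) / ((0 + ((k:ℝ)+1))^(k+2)) = 1/((k:ℝ)+1)^(k+1) := by
      rw [mul_zero, zero_add, pow_succ]
      rw [div_eq_div_iff (by positivity) (by positivity)]
      ring
    rw [h2] at h1
    apply h1.congr'
    filter_upwards [eventually_gt_atTop (0:ℝ)] with t ht
    have ht' : t ≠ 0 := ne_of_gt ht
    have hd : (1+((k:ℝ)+1)*t) ≠ 0 := by positivity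
    have h3 : t⁻¹ + ((k:ℝ)+1) = (1+((k:ℝ)+1)*t)/t := by field_simp
    rw [aA, h3, div_pow]
    rw [div_div_eq_mul_div, div_eq_div_iff (by positivity) (by positivity)]
    field_simp
    ring
  have hB : Tendsto (aB k) atTop (𝓝 0) := by
    apply Tendsto.div_atTop tendsto_const_nhds
    exact (tendsto_pow_atTop (by omega : k+2 ≠ 0)).comp
      (tendsto_atTop_add_const_right atTop ((k:ℝ)+1) tendsto_id)
  have := ((tendsto_const_nhds : Tendsto (fun _ : ℝ => (3*(k:ℝ)+4)/((k:ℝ)+2)^(k+2)) atTop _).sub hA).sub hB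
  simpa using! this

lemma aRho_le_one_iff (k : ℕ) {t : ℝ} (ht : 0 < t) :
    aRho k t ≤ 1 ↔ t^k*(t+((k:ℝ)+1))^(k+3) ≤ (1+((k:ℝ)+1)*t)^(k+3) := by
  rw [aRho, div_le_one (by positivity)]
  constructor
  · intro h
    have h2 : t*(t^k*(t+((k:ℝ)+1))^(k+3)) ≤ t*(1+((k:ℝ)+1)*t)^(k+3) := by
      calc t*(t^k*(t+((k:ℝ)+1))^(k+3)) = t^(k+1)*(t+((k:ℝ)+1))^(k+3) := by ring
        _ ≤ t*(1+((k:ℝ)+1)*t)^(k+3) := h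
    exact le_of_mul_le_mul_left h2 ht
  · intro h
    calc t^(k+1)*(t+((k:ℝ)+1))^(k+3) = t*(t^k*(t+((k:ℝ)+1))^(k+3)) := by ring
      _ ≤ t*(1+((k:ℝ)+1)*t)^(k+3) := mul_le_mul_of_nonneg_left h ht.le

lemma one_le_aRho_iff (k : ℕ) {t : ℝ} (ht : 0 < t) :
    1 ≤ aRho k t ↔ (1+((k:ℝ)+1)*t)^(k+3) ≤ t^k*(t+((k:ℝ)+1))^(k+3) := by
  rw [aRho, le_div_iff₀ (by positivity)]
  constructor
  · intro h
    have h2 : t*(1+((k:ℝ)+1)*t)^(k+3) ≤ t*(t^k*(t+((k:ℝ)+1))^(k+3)) := by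
      calc t*(1+((k:ℝ)+1)*t)^(k+3) ≤ t^(k+1)*(t+((k:ℝ)+1))^(k+3) := by linarith
        _ = t*(t^k*(t+((k:ℝ)+1))^(k+3)) := by ring
    exact le_of_mul_le_mul_left h2 ht
  · intro h
    calc 1*(t*(1+((k:ℝ)+1)*t)^(k+3)) = t*(1+((k:ℝ)+1)*t)^(k+3) := by ring
      _ ≤ t*(t^k*(t+((k:ℝ)+1))^(k+3)) := mul_le_mul_of_nonneg_left h ht.le
      _ = t^(k+1)*(t+((k:ℝ)+1))^(k+3) := by ring

lemma aS_nonneg (k : ℕ) {T : ℝ} (hT : 1 ≤ T) : 0 ≤ aS k T := by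
  by_cases hrho : aRho k T ≤ 1
  · -- ρ(T) ≤ 1 : S monotone on [1,T]
    have hmono : MonotoneOn (aS k) (Icc 1 T) := by
      have hc : ContinuousOn (aS k) (Icc 1 T) := fun x hx =>
        ((hd_aS k (by linarith [hx.1] : (0:ℝ) < x)).continuousAt).continuousWithinAt
      apply monotoneOn_of_deriv_nonneg (convex_Icc _ _) hc
      · intro x hx
        rw [interior_Icc] at hx
        exact ((hd_aS k (by linarith [hx.1] : (0:ℝ) < x)).differentiableAt).differentiableWithinAt
      · intro x hx
        rw [interior_Icc] at hx
        have hx0 : (0:ℝ) < x := by linarith [hx.1]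
        rw [(hd_aS k hx0).deriv]
        have hrx : aRho k x ≤ 1 := by
          rcases le_total x (aR2 k) with hcase | hcase
          · have := aRho_anti k (left_mem_Icc.2 (aR2_ge_one k))
              (mem_Icc.2 ⟨hx.1.le, hcase⟩) hx.1.le
            rwa [aRho_one] at this
          · have := aRho_mono k (mem_Ici.2 hcase) (mem_Ici.2 (hcase.trans hx.2.le)) hx.2.le
            exact this.trans hrho
        have hp := (aRho_le_one_iff k hx0).1 hrx
        have : (0:ℝ) ≤ (1+((k:ℝ)+1)*x)^(k+3) - x^k*(x+((k:ℝ)+1))^(k+3) := by linarith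
        positivity
    have := hmono (left_mem_Icc.2 hT) (right_mem_Icc.2 hT) hT
    rwa [aS_one] at this
  · -- ρ(T) > 1 : S antitone on [T,∞), bounded below by limit
    push_neg at hrho
    have hT0 : (0:ℝ) < T := by linarith
    have hTr2 : aR2 k ≤ T := by
      by_contra hcon
      push_neg at hcon
      have := aRho_anti k (left_mem_Icc.2 (aR2_ge_one k)) (mem_Icc.2 ⟨hT, hcon.le⟩) hT
      rw [aRho_one] at this
      linarith
    have hanti : AntitoneOn (aS k) (Ici T) := by
      have hc : ContinuousOn (aS k) (Ici T) := fun x hx =>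
        ((hd_aS k (by simp only [mem_Ici] at hx; linarith : (0:ℝ) < x)).continuousAt).continuousWithinAt
      apply antitoneOn_of_deriv_nonpos (convex_Ici _) hc
      · intro x hx
        rw [interior_Ici] at hx
        simp only [mem_Ioi] at hx
        exact ((hd_aS k (by linarith : (0:ℝ) < x)).differentiableAt).differentiableWithinAt
      · intro x hx
        rw [interior_Ici] at hx
        simp only [mem_Ioi] at hx
        have hx0 : (0:ℝ) < x := by linarith
        rw [(hd_aS k hx0).deriv]
        have hrx : 1 ≤ aRho k x := by
          have := aRho_mono k (mem_Ici.2 hTr2) (mem_Ici.2 (hTr2.trans hx.le)) hx.le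
          linarith
        have hp := (one_le_aRho_iff k hx0).1 hrx
        apply div_nonpos_of_nonpos_of_nonneg _ (by positivity)
        have h1 : (1+((k:ℝ)+1)*x)^(k+3) - x^k*(x+((k:ℝ)+1))^(k+3) ≤ 0 := by linarith
        have h2 : (0:ℝ) ≤ ((k:ℝ)+2)*((k:ℝ)+1) := by positivity
        exact mul_nonpos_of_nonneg_of_nonpos h2 h1
    have hlim := aS_tendsto k
    have hev : ∀ᶠ x in atTop, aS k x ≤ aS k T :=
      (eventually_ge_atTop T).mono fun x hx => hanti (mem_Ici.2 le_rfl) (mem_Ici.2 hx) hx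
    have hL := le_of_tendsto hlim hev
    have hB : 1/((k:ℝ)+1)^(k+1) ≤ (3*(k:ℝ)+4)/((k:ℝ)+2)^(k+2) := by
      rw [div_le_div_iff₀ (by positivity) (by positivity)]
      have := pow_bound k
      nlinarith [this]
    linarith

lemma aPsi_one (k : ℕ) : aPsi k 1 = 0 := by
  rw [aPsi]
  rw [show (1:ℝ) + ((k:ℝ)+1)*1 = 1 + ((k:ℝ)+1) by ring]
  norm_num

lemma aPsi_nonneg (k : ℕ) {T : ℝ} (hT : 1 ≤ T) : 0 ≤ aPsi k T := by
  have hmono : MonotoneOn (aPsi k) (Icc 1 T) := by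
    have hc : ContinuousOn (aPsi k) (Icc 1 T) := fun x hx =>
      ((hd_aPsi k (by linarith [hx.1] : (0:ℝ) < x)).continuousAt).continuousWithinAt
    apply monotoneOn_of_deriv_nonneg (convex_Icc _ _) hc
    · intro x hx
      rw [interior_Icc] at hx
      exact ((hd_aPsi k (by linarith [hx.1] : (0:ℝ) < x)).differentiableAt).differentiableWithinAt
    · intro x hx
      rw [interior_Icc] at hx
      rw [(hd_aPsi k (by linarith [hx.1] : (0:ℝ) < x)).deriv]
      exact aS_nonneg k hx.1.le
  have := hmono (left_mem_Icc.2 hT) (right_mem_Icc.2 hT) hT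
  rwa [aPsi_one] at this

lemma aPhi_one (k : ℕ) : aPhi k 1 = 0 := by
  rw [aPhi]
  rw [show (1:ℝ) + ((k:ℝ)+1)*1 = (k:ℝ)+2 by ring, show (1:ℝ) + ((k:ℝ)+1) = (k:ℝ)+2 by ring]
  have h2 : ((k:ℝ)+2) ≠ 0 := by positivity
  have h3 : ((k:ℝ)+2)^k ≠ 0 := by positivity
  field_simp
  ring

lemma aPhi_nonneg (k : ℕ) {T : ℝ} (hT : 1 ≤ T) : 0 ≤ aPhi k T := by
  have hmono : MonotoneOn (aPhi k) (Icc 1 T) := by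
    have hc : ContinuousOn (aPhi k) (Icc 1 T) := fun x hx =>
      ((hd_aPhi k (by linarith [hx.1] : (0:ℝ) < x)).continuousAt).continuousWithinAt
    apply monotoneOn_of_deriv_nonneg (convex_Icc _ _) hc
    · intro x hx
      rw [interior_Icc] at hx
      exact ((hd_aPhi k (by linarith [hx.1] : (0:ℝ) < x)).differentiableAt).differentiableWithinAt
    · intro x hx
      rw [interior_Icc] at hx
      have hx0 : (0:ℝ) < x := by linarith [hx.1]
      rw [(hd_aPhi k hx0).deriv]
      have h1 := aPsi_nonneg k hx.1.le
      positivity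
  have := hmono (left_mem_Icc.2 hT) (right_mem_Icc.2 hT) hT
  rwa [aPhi_one] at this

/-- `𝒫_n(y)² + 𝒫_n(-y)² ≤ (2n² + 4(n-1)(3n-2)y²)/nⁿ`. -/
theorem P_sq_add_P_sq_le (n : ℕ) (hn : 2 ≤ n) (y : ℝ) (hy : 0 ≤ y) :
    P n y ^ 2 + P n (-y) ^ 2 ≤
      (2 * (n : ℝ) ^ 2 + 4 * ((n : ℝ) - 1) * (3 * (n : ℝ) - 2) * y ^ 2) / (n : ℝ) ^ n := by
  obtain ⟨k, rfl⟩ : ∃ k, n = k + 2 := ⟨n - 2, by omega⟩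
  have hr2 : Real.sqrt (1 + y^2) ^ 2 = 1 + y^2 := Real.sq_sqrt (by positivity)
  have hr0 : 0 ≤ Real.sqrt (1 + y^2) := Real.sqrt_nonneg _
  have hr1 : 1 ≤ Real.sqrt (1 + y^2) := by nlinarith
  set s : ℝ := Real.sqrt (1 + y^2) + y with hs
  have hs1 : 1 ≤ s := by rw [hs]; linarith
  have hs0 : 0 < s := by linarith
  have hinv : s * (Real.sqrt (1 + y^2) - y) = 1 := by
    rw [hs]; nlinarith [hr2]
  have ht1 : 1 ≤ s^2 := by nlinarith
  have ht0 : 0 < s^2 := by positivity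
  have h2ys : 2*y*s = s^2 - 1 := by linear_combination (-1)*hinv - s*hs
  have hyt : (s^2 - 1)^2 = 4 * y^2 * s^2 := by rw [← h2ys]; ring
  have hb1 : (0:ℝ) < 1 + ((k:ℝ)+1)*s^2 := by positivity
  have hcast1 : (((k+2 : ℕ) : ℝ) - 1) = (k:ℝ)+1 := by push_cast; ring
  have hcast2 : ((((k+2 : ℕ) : ℝ)) - 2)/2 = (k:ℝ)/2 := by push_cast; ring
  have hsub : (k+2) - 1 = k+1 := rfl
  have hsq_rpow : ∀ b : ℝ, 0 < b → (b ^ ((k:ℝ)/2)) ^ 2 = b ^ k := by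
    intro b hb
    rw [← Real.rpow_natCast (b ^ ((k:ℝ)/2)) 2, ← Real.rpow_mul hb.le]
    norm_num
  have hP1 : P (k+2) y ^ 2 = (s^2)^(k+1) / (1 + ((k:ℝ)+1)*s^2)^k := by
    simp only [P]
    rw [hsub, hcast1, hcast2, ← hs, div_pow, hsq_rpow _ hb1]
    congr 1
    rw [← pow_mul, ← pow_mul, mul_comm]
  have hneg : Real.sqrt (1 + (-y)^2) + (-y) = s⁻¹ := by
    rw [show 1 + (-y)^2 = 1 + y^2 by ring]
    exact eq_inv_of_mul_eq_one_left (by linear_combination hinv)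
  have hb2 : (0:ℝ) < 1 + ((k:ℝ)+1)*(s⁻¹)^2 := by positivity
  have hP2 : P (k+2) (-y) ^ 2 = 1 / (s^2 * (s^2 + ((k:ℝ)+1))^k) := by
    simp only [P]
    rw [hsub, hcast1, hcast2, hneg, div_pow, hsq_rpow _ hb2]
    rw [show ((s⁻¹)^(k+1))^2 = ((s^2)⁻¹)^(k+1) by rw [← pow_mul, mul_comm, pow_mul, inv_pow]]
    rw [show 1 + ((k:ℝ)+1)*(s⁻¹)^2 = (s^2 + ((k:ℝ)+1))/s^2 by field_simp]
    rw [div_pow]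
    have hne1 : (s^2 + ((k:ℝ)+1)) ≠ 0 := by positivity
    have hne2 : s ≠ 0 := ne_of_gt hs0
    field_simp
    simp; rw [pow_succ]; field_simp; ring
  have hPhi := aPhi_nonneg k ht1
  rw [aPhi] at hPhi
  rw [hP1, hP2]
  have hC : (0:ℝ) < ((k:ℝ)+2)^(k+2) := by positivity
  have hcast3 : ((k+2:ℕ):ℝ) = (k:ℝ)+2 := by push_cast; ring
  rw [hcast3, show (((k:ℝ)+2) - 1) = (k:ℝ)+1 by ring, show (3*((k:ℝ)+2) - 2) = 3*(k:ℝ)+4 by ring]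
  have hkey : ((k:ℝ)+1)*(3*(k:ℝ)+4)*(s^2-1)^2/(s^2*((k:ℝ)+2)^(k+2))
      = 4*((k:ℝ)+1)*(3*(k:ℝ)+4)*y^2/((k:ℝ)+2)^(k+2) := by
    rw [div_eq_div_iff (by positivity) (by positivity)]
    linear_combination (((k:ℝ)+1)*(3*(k:ℝ)+4)*((k:ℝ)+2)^(k+2)) * hyt
  have hsplit : (2*((k:ℝ)+2)^2 + 4*((k:ℝ)+1)*(3*(k:ℝ)+4)*y^2)/((k:ℝ)+2)^(k+2)
      = 2*((k:ℝ)+2)^2/((k:ℝ)+2)^(k+2) + 4*((k:ℝ)+1)*(3*(k:ℝ)+4)*y^2/((k:ℝ)+2)^(k+2) :=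
    add_div _ _ _
  nlinarith [hPhi, hkey, hsplit]
end
end

section
/- For every real x ≥ 0 and every integer n ≥ 2, Σ_{k=3}^{n+1} C(n+1, k) · [ 1/(n+x)^{k−2} + (−1)^k/(1+nx)^{k−2} ] · (1−x)^k ≤ 0, with equality if and only if x = 1. (For n = 2 the sum runs over k = 3; in general it runs over 3 ≤ k ≤ n+1.) -/
/-- Homogeneous Bonferroni lower bound:
`u^k * (u³ - k w u² + C(k,2) w² u - C(k,3) w³) ≤ (u-w)^k * u³` for `0 ≤ w ≤ u`. -/
lemma bonf (k : ℕ) (u w : ℝ) (hw : 0 ≤ w) (hwu : w ≤ u) :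
    u ^ k * (u ^ 3 - k * w * u ^ 2 + ((k : ℝ) * (k - 1) / 2) * w ^ 2 * u
      - ((k : ℝ) * (k - 1) * (k - 2) / 6) * w ^ 3) ≤ (u - w) ^ k * u ^ 3 := by
  have hu : (0 : ℝ) ≤ u := le_trans hw hwu
  induction k with
  | zero => norm_num
  | succ k ih =>
    have hC3 : (0 : ℝ) ≤ (k : ℝ) * (k - 1) * (k - 2) := by
      rcases k with _ | k
      · norm_num
      rcases k with _ | m
      · norm_num
      · push_cast
        have h0 : (0:ℝ) ≤ (m:ℝ) := Nat.cast_nonneg m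
        nlinarith [mul_nonneg (mul_nonneg (by linarith : (0:ℝ) ≤ (m:ℝ)+2)
          (by linarith : (0:ℝ) ≤ (m:ℝ)+1)) h0]
    have h1 : (u - w) * (u ^ k *
        (u ^ 3 - k * w * u ^ 2 + ((k : ℝ) * (k - 1) / 2) * w ^ 2 * u
          - ((k : ℝ) * (k - 1) * (k - 2) / 6) * w ^ 3)) ≤ (u - w) * ((u - w) ^ k * u ^ 3) :=
      mul_le_mul_of_nonneg_left ih (by linarith)
    have h2 : u ^ (k + 1) *
        (u ^ 3 - (k + 1 : ℝ) * w * u ^ 2 + (((k : ℝ) + 1) * ((k : ℝ) + 1 - 1) / 2) * w ^ 2 * u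
          - (((k : ℝ) + 1) * ((k : ℝ) + 1 - 1) * ((k : ℝ) + 1 - 2) / 6) * w ^ 3)
        ≤ (u - w) * (u ^ k *
        (u ^ 3 - k * w * u ^ 2 + ((k : ℝ) * (k - 1) / 2) * w ^ 2 * u
          - ((k : ℝ) * (k - 1) * (k - 2) / 6) * w ^ 3)) := by
      have key : (u - w) * (u ^ 3 - k * w * u ^ 2 + ((k : ℝ) * (k - 1) / 2) * w ^ 2 * u
          - ((k : ℝ) * (k - 1) * (k - 2) / 6) * w ^ 3)
          - u * (u ^ 3 - (k + 1 : ℝ) * w * u ^ 2 + (((k : ℝ) + 1) * ((k : ℝ) + 1 - 1) / 2) * w ^ 2 * u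
          - (((k : ℝ) + 1) * ((k : ℝ) + 1 - 1) * ((k : ℝ) + 1 - 2) / 6) * w ^ 3)
          = ((k : ℝ) * (k - 1) * (k - 2) / 6) * w ^ 4 := by ring
      have hpk : (0 : ℝ) ≤ u ^ k := pow_nonneg hu k
      have : u * (u ^ 3 - (k + 1 : ℝ) * w * u ^ 2 + (((k : ℝ) + 1) * ((k : ℝ) + 1 - 1) / 2) * w ^ 2 * u
          - (((k : ℝ) + 1) * ((k : ℝ) + 1 - 1) * ((k : ℝ) + 1 - 2) / 6) * w ^ 3)
          ≤ (u - w) * (u ^ 3 - k * w * u ^ 2 + ((k : ℝ) * (k - 1) / 2) * w ^ 2 * u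
          - ((k : ℝ) * (k - 1) * (k - 2) / 6) * w ^ 3) := by nlinarith [pow_nonneg hw 4]
      calc u ^ (k + 1) *
          (u ^ 3 - (k + 1 : ℝ) * w * u ^ 2 + (((k : ℝ) + 1) * ((k : ℝ) + 1 - 1) / 2) * w ^ 2 * u
            - (((k : ℝ) + 1) * ((k : ℝ) + 1 - 1) * ((k : ℝ) + 1 - 2) / 6) * w ^ 3)
          = u ^ k * (u * (u ^ 3 - (k + 1 : ℝ) * w * u ^ 2 + (((k : ℝ) + 1) * ((k : ℝ) + 1 - 1) / 2) * w ^ 2 * u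
            - (((k : ℝ) + 1) * ((k : ℝ) + 1 - 1) * ((k : ℝ) + 1 - 2) / 6) * w ^ 3)) := by ring
        _ ≤ u ^ k * ((u - w) * (u ^ 3 - k * w * u ^ 2 + ((k : ℝ) * (k - 1) / 2) * w ^ 2 * u
            - ((k : ℝ) * (k - 1) * (k - 2) / 6) * w ^ 3)) := mul_le_mul_of_nonneg_left this hpk
        _ = (u - w) * (u ^ k * (u ^ 3 - k * w * u ^ 2 + ((k : ℝ) * (k - 1) / 2) * w ^ 2 * u
            - ((k : ℝ) * (k - 1) * (k - 2) / 6) * w ^ 3)) := by ring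
    have h3 : (u - w) * ((u - w) ^ k * u ^ 3) = (u - w) ^ (k + 1) * u ^ 3 := by ring
    push_cast
    push_cast at h2
    linarith

/-- `FC`: `(2+kv)(1+(k+1)v)^k ≤ (1+kv)^k (2+3kv)` for `v ≥ 0`. -/
lemma FC (k : ℕ) (v : ℝ) (hv : 0 ≤ v) :
    (2 + k * v) * (1 + k * v + v) ^ k ≤ (1 + k * v) ^ k * (2 + 3 * (k * v)) := by
  set u : ℝ := 1 + k * v + v with hu_def
  have hkv : (0:ℝ) ≤ k * v := by positivity
  have hu : (0 : ℝ) < u := by rw [hu_def]; linarith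
  have hvu : v ≤ u := by rw [hu_def]; linarith
  have hb := bonf k u v hv hvu
  have huv : u - v = 1 + k * v := by rw [hu_def]; ring
  set X : ℝ := u ^ 3 - k * v * u ^ 2 + ((k : ℝ) * (k - 1) / 2) * v ^ 2 * u
      - ((k : ℝ) * (k - 1) * (k - 2) / 6) * v ^ 3 with hX_def
  -- (2+kv) u^3 ≤ (2+3kv) X
  have hkey : (2 + k * v) * u ^ 3 ≤ (2 + 3 * (k * v)) * X := by
    have hid : (2 + 3 * ((k:ℝ) * v)) * X - (2 + (k:ℝ) * v) * u ^ 3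
        = (k:ℝ) * v ^ 2 * (1 + 7/3 * v + 2 * v ^ 2)
          + (k:ℝ)^2 * v ^ 3 * (3/2 + 1/2 * v) + (k:ℝ)^3 * v ^ 3 * (1/6 + 3/2 * v) := by
      rw [hX_def, hu_def]; ring
    have h0 : (0:ℝ) ≤ (2 + 3 * ((k:ℝ) * v)) * X - (2 + (k:ℝ) * v) * u ^ 3 := by
      rw [hid]; positivity
    linarith [h0]
  -- chain
  have hchain : (2 + k * v) * u ^ k * u ^ 3 ≤ (1 + k * v) ^ k * (2 + 3 * (k * v)) * u ^ 3 := by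
    have hupk : (0:ℝ) ≤ u ^ k := le_of_lt (pow_pos hu k)
    have h1 : (2 + k * v) * u ^ k * u ^ 3 ≤ (2 + 3 * (k * v)) * (u ^ k * X) := by
      have := mul_le_mul_of_nonneg_left hkey hupk
      nlinarith [this]
    have h2 : (2 + 3 * (k * v)) * (u ^ k * X) ≤ (2 + 3 * (k * v)) * ((u - v) ^ k * u ^ 3) :=
      mul_le_mul_of_nonneg_left hb (by linarith)
    rw [huv] at h2
    calc (2 + k * v) * u ^ k * u ^ 3 ≤ (2 + 3 * (k * v)) * (u ^ k * X) := h1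
      _ ≤ (2 + 3 * (k * v)) * ((1 + k * v) ^ k * u ^ 3) := h2
      _ = (1 + k * v) ^ k * (2 + 3 * (k * v)) * u ^ 3 := by ring
  have hu3 : (0:ℝ) < u ^ 3 := pow_pos hu 3
  have := (mul_le_mul_iff_of_pos_right hu3).mp (by linarith [hchain] :
    (2 + (k:ℝ) * v) * (1 + (k:ℝ) * v + v) ^ k * u ^ 3 ≤ (1 + (k:ℝ) * v) ^ k * (2 + 3 * ((k:ℝ) * v)) * u ^ 3)
  exact this

/-- `(a^k-1)/k` is increasing: `K (a^i - 1) ≤ i (a^K - 1)` for `1 ≤ a`, `i ≤ K`. -/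
lemma convex_pow (a : ℝ) (ha : 1 ≤ a) (i K : ℕ) (hiK : i ≤ K) :
    (K : ℝ) * (a ^ i - 1) ≤ (i : ℝ) * (a ^ K - 1) := by
  rcases Nat.eq_zero_or_pos i with hi0 | hi1
  · subst hi0; simp
  have ha0 : (0:ℝ) ≤ a := by linarith
  have hgi : a ^ i - 1 = (∑ j ∈ Finset.range i, a ^ j) * (a - 1) := (geom_sum_mul a i).symm
  have hgK : a ^ K - 1 = (∑ j ∈ Finset.range K, a ^ j) * (a - 1) := (geom_sum_mul a K).symm
  have hsplit : (∑ j ∈ Finset.range K, a ^ j)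
      = (∑ j ∈ Finset.range i, a ^ j) + ∑ j ∈ Finset.Ico i K, a ^ j := by
    rw [Finset.range_eq_Ico, Finset.range_eq_Ico]
    exact (Finset.sum_Ico_consecutive (fun j => a ^ j) (Nat.zero_le i) hiK).symm
  -- each term of range i is ≤ a^(i-1); each term of Ico i K is ≥ a^(i-1)
  have hSi : (∑ j ∈ Finset.range i, a ^ j) ≤ (i : ℝ) * a ^ (i - 1) := by
    calc (∑ j ∈ Finset.range i, a ^ j) ≤ ∑ j ∈ Finset.range i, a ^ (i - 1) := by
          apply Finset.sum_le_sum
          intro j hj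
          have hj' := Finset.mem_range.mp hj
          exact pow_le_pow_right₀ ha (by omega : j ≤ i - 1)
      _ = (i : ℝ) * a ^ (i - 1) := by
          rw [Finset.sum_const, Finset.card_range, nsmul_eq_mul]
  have hT : ((K : ℝ) - i) * a ^ (i - 1) ≤ ∑ j ∈ Finset.Ico i K, a ^ j := by
    calc ((K : ℝ) - i) * a ^ (i - 1) = ((K - i : ℕ) : ℝ) * a ^ (i - 1) := by
          rw [Nat.cast_sub hiK]
      _ = ∑ _j ∈ Finset.Ico i K, a ^ (i - 1) := by
          rw [Finset.sum_const, Nat.card_Ico, nsmul_eq_mul]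
      _ ≤ ∑ j ∈ Finset.Ico i K, a ^ j := by
          apply Finset.sum_le_sum
          intro j hj
          have hj' := (Finset.mem_Ico.mp hj).1
          exact pow_le_pow_right₀ ha (by omega)
  have hKi : (0:ℝ) ≤ (K : ℝ) - i := by
    have := Nat.cast_le (α := ℝ) |>.mpr hiK; linarith
  have hi0' : (0:ℝ) ≤ (i : ℝ) := Nat.cast_nonneg i
  have hmain : (K : ℝ) * (∑ j ∈ Finset.range i, a ^ j) ≤ (i : ℝ) * (∑ j ∈ Finset.range K, a ^ j) := by
    rw [hsplit]
    have h1 : ((K : ℝ) - i) * (∑ j ∈ Finset.range i, a ^ j) ≤ ((K : ℝ) - i) * ((i:ℝ) * a ^ (i-1)) :=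
      mul_le_mul_of_nonneg_left hSi hKi
    have h2 : (i : ℝ) * (((K : ℝ) - i) * a ^ (i - 1)) ≤ (i:ℝ) * (∑ j ∈ Finset.Ico i K, a ^ j) :=
      mul_le_mul_of_nonneg_left hT hi0'
    nlinarith [h1, h2]
  have ha1 : (0:ℝ) ≤ a - 1 := by linarith
  calc (K : ℝ) * (a ^ i - 1) = ((K : ℝ) * (∑ j ∈ Finset.range i, a ^ j)) * (a - 1) := by
        rw [hgi]; ring
    _ ≤ ((i : ℝ) * (∑ j ∈ Finset.range K, a ^ j)) * (a - 1) :=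
        mul_le_mul_of_nonneg_right hmain ha1
    _ = (i : ℝ) * (a ^ K - 1) := by rw [hgK]; ring

/-- Step claim: `(2+kv) A^i ≤ B^i (2+kv+2iv)` for `i ≤ k`. -/
lemma step_claim (k i : ℕ) (hik : i ≤ k) (v : ℝ) (hv : 0 ≤ v) :
    (2 + k * v) * (1 + k * v + v) ^ i ≤ (1 + k * v) ^ i * (2 + k * v + 2 * i * v) := by
  rcases Nat.eq_zero_or_pos k with hk0 | hk1
  · subst hk0
    interval_cases i
    simp
  set B : ℝ := 1 + k * v with hB_def
  set A : ℝ := 1 + k * v + v with hA_def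
  have hkv : (0:ℝ) ≤ k * v := by positivity
  have hB : (0:ℝ) < B := by rw [hB_def]; linarith
  have hBA : B ≤ A := by rw [hB_def, hA_def]; linarith
  have ha : (1:ℝ) ≤ A / B := (one_le_div hB).mpr hBA
  have hconv := convex_pow (A / B) ha i k hik
  have hBi : (0:ℝ) < B ^ i := pow_pos hB i
  have hBki : (0:ℝ) < B ^ (k - i) := pow_pos hB (k - i)
  have hBk : B ^ k = B ^ i * B ^ (k - i) := by rw [← pow_add]; congr 1; omega
  have e1 : ((A / B) ^ i - 1) * B ^ k = A ^ i * B ^ (k - i) - B ^ k := by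
    rw [div_pow, hBk]; field_simp
  have e2 : ((A / B) ^ k - 1) * B ^ k = A ^ k - B ^ k := by
    rw [div_pow]; field_simp
  have hconv2 : (k : ℝ) * (A ^ i * B ^ (k - i) - B ^ k) ≤ (i : ℝ) * (A ^ k - B ^ k) := by
    have := mul_le_mul_of_nonneg_right hconv (le_of_lt (pow_pos hB k))
    calc (k : ℝ) * (A ^ i * B ^ (k - i) - B ^ k) = (k : ℝ) * (((A / B) ^ i - 1) * B ^ k) := by
          rw [e1]
      _ ≤ (i : ℝ) * (((A / B) ^ k - 1) * B ^ k) := by nlinarith [this]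
      _ = (i : ℝ) * (A ^ k - B ^ k) := by rw [e2]
  have hFC := FC k v hv
  have hgap : (2 + k * v) * (A ^ k - B ^ k) ≤ 2 * (k * v) * B ^ k := by
    have : (2 + (k:ℝ) * v) * A ^ k ≤ B ^ k * (2 + 3 * ((k:ℝ) * v)) := hFC
    nlinarith [this]
  have hi0 : (0:ℝ) ≤ (i : ℝ) := Nat.cast_nonneg i
  have h2kv : (0:ℝ) ≤ 2 + (k:ℝ) * v := by linarith
  -- k*(2+kv)*A^i*B^(k-i) ≤ k*B^k*(2+kv+2iv)
  have hmain : (k:ℝ) * ((2 + k * v) * (A ^ i * B ^ (k - i))) ≤ (k:ℝ) * (B ^ k * (2 + k * v + 2 * i * v)) := by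
    have h1 : (2 + (k:ℝ) * v) * ((k:ℝ) * (A ^ i * B ^ (k - i) - B ^ k))
        ≤ (2 + (k:ℝ) * v) * ((i : ℝ) * (A ^ k - B ^ k)) :=
      mul_le_mul_of_nonneg_left hconv2 h2kv
    have h2 : (i:ℝ) * ((2 + k * v) * (A ^ k - B ^ k)) ≤ (i:ℝ) * (2 * (k * v) * B ^ k) :=
      mul_le_mul_of_nonneg_left hgap hi0
    nlinarith [h1, h2]
  have hkpos : (0:ℝ) < (k:ℝ) := by exact_mod_cast hk1
  have hmain2 : (2 + k * v) * (A ^ i * B ^ (k - i)) ≤ B ^ k * (2 + k * v + 2 * i * v) :=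
    le_of_mul_le_mul_left hmain hkpos
  rw [hBk] at hmain2
  -- cancel B^(k-i)
  have : ((2 + k * v) * A ^ i) * B ^ (k - i) ≤ (B ^ i * (2 + k * v + 2 * i * v)) * B ^ (k - i) := by
    calc ((2 + k * v) * A ^ i) * B ^ (k - i) = (2 + k * v) * (A ^ i * B ^ (k - i)) := by ring
      _ ≤ B ^ i * B ^ (k - i) * (2 + k * v + 2 * i * v) := hmain2
      _ = (B ^ i * (2 + k * v + 2 * i * v)) * B ^ (k - i) := by ring
  exact le_of_mul_le_mul_right this hBki

/-- `C_i` : `A^i ≤ B^(i-1) ((1-v)^i + (k+2i) v)` for `1 ≤ i ≤ k+1`, `v ∈ [0,1]`. -/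
lemma Ci (k : ℕ) (v : ℝ) (hv : 0 ≤ v) (hv1 : v ≤ 1) :
    ∀ i : ℕ, 1 ≤ i → i ≤ k + 1 →
    (1 + k * v + v) ^ i ≤ (1 + k * v) ^ (i - 1) * ((1 - v) ^ i + (k + 2 * i) * v) := by
  intro i
  induction i with
  | zero => omega
  | succ i ih =>
    intro _ hik1
    rcases Nat.eq_zero_or_pos i with hi0 | hi1
    · subst hi0
      push_cast
      norm_num
      linarith [(by ring : (1:ℝ) - v + ((k:ℝ)+2)*v = 1 + (k:ℝ)*v + v)]
    -- step case : i ≥ 1, i + 1 ≤ k + 1 so i ≤ k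
    have hik : i ≤ k := by omega
    have h1 := ih hi1 (by omega)
    have hstep := step_claim k i hik v hv
    have hB : (0:ℝ) < 1 + k * v := by positivity
    have hBnn : (0:ℝ) ≤ 1 + k * v := le_of_lt hB
    have hE : (0:ℝ) ≤ (1 + (k:ℝ) * v) * (1 - v) := mul_nonneg hBnn (by linarith)
    have hApos : (0:ℝ) ≤ 1 + (k:ℝ) * v + v := by positivity
    have hBpow : (1 + (k:ℝ) * v) ^ (i - 1) * (1 + (k:ℝ) * v) = (1 + (k:ℝ) * v) ^ i := by
      rw [← pow_succ]; congr 1; omega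
    have h2 : ((1 + (k:ℝ) * v) * (1 - v)) * ((1 + k * v + v) ^ i)
        ≤ ((1 + (k:ℝ) * v) * (1 - v)) * ((1 + k * v) ^ (i - 1) * ((1 - v) ^ i + (k + 2 * i) * v)) :=
      mul_le_mul_of_nonneg_left h1 hE
    have h3 : v * ((2 + k * v) * (1 + k * v + v) ^ i)
        ≤ v * ((1 + k * v) ^ i * (2 + k * v + 2 * i * v)) :=
      mul_le_mul_of_nonneg_left hstep hv
    have hsum : (1 + (k:ℝ) * v + v) ^ (i + 1)
        ≤ ((1 + (k:ℝ) * v) * (1 - v)) * ((1 + k * v) ^ (i - 1) * ((1 - v) ^ i + (k + 2 * i) * v))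
          + v * ((1 + k * v) ^ i * (2 + k * v + 2 * i * v)) := by
      have hid : (1 + (k:ℝ) * v + v) ^ (i + 1)
          = ((1 + (k:ℝ) * v) * (1 - v)) * ((1 + k * v + v) ^ i)
            + v * ((2 + k * v) * (1 + k * v + v) ^ i) := by ring
      rw [hid]; linarith [h2, h3]
    have hrhs : ((1 + (k:ℝ) * v) * (1 - v)) * ((1 + k * v) ^ (i - 1) * ((1 - v) ^ i + (k + 2 * i) * v))
          + v * ((1 + k * v) ^ i * (2 + k * v + 2 * i * v))
        = (1 + (k:ℝ) * v) ^ i * ((1 - v) ^ (i + 1) + (k + 2 * (i + 1)) * v) := by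
      have e1 : ((1 + (k:ℝ) * v) * (1 - v)) * ((1 + k * v) ^ (i - 1) * ((1 - v) ^ i + (k + 2 * i) * v))
          = (1 + (k:ℝ) * v) ^ i * ((1 - v) * ((1 - v) ^ i + (k + 2 * i) * v)) := by
        rw [← hBpow]; ring
      rw [e1]; ring
    have goal1 : (1 + (k:ℝ) * v + v) ^ (i + 1)
        ≤ (1 + (k:ℝ) * v) ^ i * ((1 - v) ^ (i + 1) + (k + 2 * (i + 1)) * v) := by
      rw [← hrhs]; exact hsum
    have : (i + 1) - 1 = i := by omega
    rw [this]
    push_cast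
    push_cast at goal1
    linarith [goal1]

/-- Key inequality: strict for `0 < v ≤ 1`, `k ≥ 1`. -/
lemma Ekey (k : ℕ) (hk : 1 ≤ k) (v : ℝ) (hv : 0 < v) (hv1 : v ≤ 1) :
    (1 + k * v + v) ^ (k + 2) + (1 - v) ^ (k + 2) * (1 + k * v) ^ k
      < (1 + k * v) ^ (k + 2) + (1 + k * v) ^ k
        + (k + 2) * (2 * k + 1) * v ^ 2 * (1 + k * v) ^ k := by
  have hv0 : (0:ℝ) ≤ v := le_of_lt hv
  have hB : (0:ℝ) < 1 + k * v := by positivity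
  set A : ℝ := 1 + k * v + v with hA_def
  set B : ℝ := 1 + k * v with hB_def
  have hABv : A - B = v := by rw [hA_def, hB_def]; ring
  -- pointwise bounds
  have h_le : ∀ i ∈ Finset.range (k + 2),
      A ^ i * B ^ (k + 1 - i) ≤ B ^ k * ((1 - v) ^ i + (k + 2 * i) * v) := by
    intro i hi
    have hi' := Finset.mem_range.mp hi
    rcases Nat.eq_zero_or_pos i with hi0 | hi1
    · subst hi0
      apply le_of_eq
      have e : k + 1 - 0 = k + 1 := rfl
      rw [e, pow_succ, hB_def]
      push_cast
      ring
    · have hci := Ci k v hv0 hv1 i hi1 (by omega)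
      have hBnn : (0:ℝ) ≤ B ^ (k + 1 - i) := le_of_lt (pow_pos hB _)
      have := mul_le_mul_of_nonneg_right hci hBnn
      calc A ^ i * B ^ (k + 1 - i) ≤ (B ^ (i - 1) * ((1 - v) ^ i + (k + 2 * i) * v)) * B ^ (k + 1 - i) := this
        _ = (B ^ (i - 1) * B ^ (k + 1 - i)) * ((1 - v) ^ i + (k + 2 * i) * v) := by ring
        _ = B ^ k * ((1 - v) ^ i + (k + 2 * i) * v) := by
            rw [← pow_add]; congr 2; omega
  -- strict at i = 2
  have h_lt : A ^ 2 * B ^ (k + 1 - 2) < B ^ k * ((1 - v) ^ 2 + (k + 2 * 2) * v) := by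
    have hkv3 : (0:ℝ) < (k:ℝ) * v ^ 3 := by
      have : (0:ℝ) < (k:ℝ) := by exact_mod_cast hk
      positivity
    have hA2 : A ^ 2 + (k:ℝ) * v ^ 3 = B * ((1 - v) ^ 2 + (k + 2 * 2) * v) := by
      rw [hA_def, hB_def]; ring
    have h1 : A ^ 2 < B * ((1 - v) ^ 2 + (k + 2 * 2) * v) := by linarith
    have hBk1 : (0:ℝ) < B ^ (k + 1 - 2) := pow_pos hB _
    have := mul_lt_mul_of_pos_right h1 hBk1
    calc A ^ 2 * B ^ (k + 1 - 2) < B * ((1 - v) ^ 2 + (k + 2 * 2) * v) * B ^ (k + 1 - 2) := this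
      _ = (B * B ^ (k + 1 - 2)) * ((1 - v) ^ 2 + (k + 2 * 2) * v) := by ring
      _ = B ^ k * ((1 - v) ^ 2 + (k + 2 * 2) * v) := by
          rw [← pow_succ']; congr 2; omega
  have h2mem : (2:ℕ) ∈ Finset.range (k + 2) := Finset.mem_range.mpr (by omega)
  have hsum : (∑ i ∈ Finset.range (k + 2), A ^ i * B ^ (k + 1 - i))
      < ∑ i ∈ Finset.range (k + 2), B ^ k * ((1 - v) ^ i + (k + 2 * i) * v) :=
    Finset.sum_lt_sum h_le ⟨2, h2mem, h_lt⟩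
  -- geometric sums
  have hgeom2 : (∑ i ∈ Finset.range (k + 2), A ^ i * B ^ (k + 1 - i)) * v = A ^ (k + 2) - B ^ (k + 2) := by
    have h := geom_sum₂_mul A B (k + 2)
    rw [hABv] at h
    have he : (∑ i ∈ Finset.range (k + 2), A ^ i * B ^ (k + 2 - 1 - i))
        = (∑ i ∈ Finset.range (k + 2), A ^ i * B ^ (k + 1 - i)) := by
      apply Finset.sum_congr rfl
      intro i hi
      congr 2
    rw [he] at h
    exact h
  have hgeom1 : v * (∑ i ∈ Finset.range (k + 2), (1 - v) ^ i) = 1 - (1 - v) ^ (k + 2) := by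
    have := geom_sum_mul (1 - v) (k + 2)
    have h' : (∑ i ∈ Finset.range (k + 2), (1 - v) ^ i) * (-v) = (1 - v) ^ (k + 2) - 1 := by
      rw [← this]; ring_nf
    linarith [h']
  -- Gauss sum
  have hgaussN : (∑ i ∈ Finset.range (k + 2), i) * 2 = (k + 2) * (k + 1) := by
    have := Finset.sum_range_id_mul_two (k + 2)
    simpa using this
  have hgauss : (∑ i ∈ Finset.range (k + 2), (i:ℝ)) = (k + 2) * (k + 1) / 2 := by
    have : ((∑ i ∈ Finset.range (k + 2), i : ℕ) : ℝ) * 2 = ((k:ℝ) + 2) * ((k:ℝ) + 1) := by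
      exact_mod_cast congrArg (Nat.cast (R := ℝ)) hgaussN
    push_cast at this ⊢
    linarith
  -- sum of g
  have hconst : (∑ i ∈ Finset.range (k + 2), ((k:ℝ) + 2 * i)) = ((k:ℝ) + 2) * (2 * k + 1) := by
    rw [Finset.sum_add_distrib, Finset.sum_const, Finset.card_range, ← Finset.mul_sum, hgauss,
      nsmul_eq_mul]
    push_cast
    ring
  have hgsum : (∑ i ∈ Finset.range (k + 2), B ^ k * ((1 - v) ^ i + (k + 2 * i) * v))
      = B ^ k * (∑ i ∈ Finset.range (k + 2), (1 - v) ^ i) + B ^ k * v * ((k + 2) * (2 * k + 1)) := by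
    calc (∑ i ∈ Finset.range (k + 2), B ^ k * ((1 - v) ^ i + (k + 2 * i) * v))
        = B ^ k * (∑ i ∈ Finset.range (k + 2), ((1 - v) ^ i + ((k:ℝ) + 2 * i) * v)) := by
          rw [Finset.mul_sum]
      _ = B ^ k * ((∑ i ∈ Finset.range (k + 2), (1 - v) ^ i)
            + (∑ i ∈ Finset.range (k + 2), ((k:ℝ) + 2 * i)) * v) := by
          rw [Finset.sum_add_distrib, Finset.sum_mul]
      _ = B ^ k * (∑ i ∈ Finset.range (k + 2), (1 - v) ^ i) + B ^ k * v * ((k + 2) * (2 * k + 1)) := by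
          rw [hconst]
          ring
  -- multiply hsum by v
  have hfinal : A ^ (k + 2) - B ^ (k + 2)
      < B ^ k * (1 - (1 - v) ^ (k + 2)) + B ^ k * v ^ 2 * ((k + 2) * (2 * k + 1)) := by
    have hm := mul_lt_mul_of_pos_left hsum hv
    rw [hgsum] at hm
    have lhs_eq : v * (∑ i ∈ Finset.range (k + 2), A ^ i * B ^ (k + 1 - i)) = A ^ (k + 2) - B ^ (k + 2) := by
      rw [mul_comm]; exact hgeom2
    rw [lhs_eq] at hm
    have rhs_eq : v * (B ^ k * (∑ i ∈ Finset.range (k + 2), (1 - v) ^ i) + B ^ k * v * ((k + 2) * (2 * k + 1)))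
        = B ^ k * (1 - (1 - v) ^ (k + 2)) + B ^ k * v ^ 2 * ((k + 2) * (2 * k + 1)) := by
      have : v * (B ^ k * (∑ i ∈ Finset.range (k + 2), (1 - v) ^ i))
          = B ^ k * (v * (∑ i ∈ Finset.range (k + 2), (1 - v) ^ i)) := by ring
      rw [mul_add, this, hgeom1]
      ring
    rw [rhs_eq] at hm
    exact hm
  nlinarith [hfinal]

/-- Transported inequality `T < 0` for `x ≥ 0`, `x ≠ 1`. -/
lemma Tneg (k : ℕ) (hk : 1 ≤ k) (x : ℝ) (hx : 0 ≤ x) (hx1 : x ≠ 1) :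
    ((k:ℝ)+2)^(k+2) * (1+((k:ℝ)+1)*x)^k + ((k:ℝ)+2)^(k+2) * x^(k+2) * ((k:ℝ)+1+x)^k
      < (((k:ℝ)+1+x) * (1+((k:ℝ)+1)*x))^k
        * (((k:ℝ)+1+x)^2 + (1+((k:ℝ)+1)*x)^2 + ((k:ℝ)+2)*(2*(k:ℝ)+1)*(1-x)^2) := by
  have hP : (0:ℝ) < (k:ℝ)+1+x := by positivity
  have hQ : (0:ℝ) < 1+((k:ℝ)+1)*x := by positivity
  set P : ℝ := (k:ℝ)+1+x with hP_def
  set Q : ℝ := 1+((k:ℝ)+1)*x with hQ_def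
  have hexpand : (P * Q)^k * (P^2 + Q^2 + ((k:ℝ)+2)*(2*(k:ℝ)+1)*(1-x)^2)
      = P^(k+2) * Q^k + P^k * Q^(k+2) + ((k:ℝ)+2)*(2*(k:ℝ)+1)*(1-x)^2 * (P^k * Q^k) := by
    rw [mul_pow]
    ring
  rcases lt_or_gt_of_ne hx1 with hlt | hgt
  · -- x < 1 : v = (1-x)/Q
    set v : ℝ := (1-x)/Q with hv_def
    have hv : 0 < v := div_pos (by linarith) hQ
    have hkx : (0:ℝ) ≤ ((k:ℝ)+1)*x := by positivity
    have hv1 : v ≤ 1 := by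
      rw [hv_def, div_le_one hQ, hQ_def]; linarith
    have hEkey := Ekey k hk v hv hv1
    have eAQ : (1+(k:ℝ)*v+v)*Q = (k:ℝ)+2 := by
      rw [hv_def]; field_simp; rw [hQ_def]; ring
    have eBQ : (1+(k:ℝ)*v)*Q = P := by
      rw [hv_def]; field_simp; rw [hQ_def, hP_def]; ring
    have evQ : (1-v)*Q = ((k:ℝ)+2)*x := by
      rw [hv_def]; field_simp; rw [hQ_def]; ring
    have evQ2 : v*Q = 1-x := by
      rw [hv_def]; field_simp
    have hsplit : Q^(2*k+2) = Q^(k+2) * Q^k := by rw [← pow_add]; congr 1; omega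
    have hsplit2 : Q^(2*k+2) = Q^2 * (Q^k * Q^k) := by
      rw [← pow_add, ← pow_add]; congr 1; omega
    have hmul := mul_lt_mul_of_pos_right hEkey (pow_pos hQ (2*k+2))
    have L1 : (1+(k:ℝ)*v+v)^(k+2) * Q^(2*k+2) = ((k:ℝ)+2)^(k+2) * Q^k := by
      rw [hsplit, ← mul_assoc, ← mul_pow, eAQ]
    have L2 : ((1-v)^(k+2) * (1+(k:ℝ)*v)^k) * Q^(2*k+2)
        = ((k:ℝ)+2)^(k+2) * x^(k+2) * P^k := by
      rw [hsplit]
      have e : ((1-v)^(k+2) * (1+(k:ℝ)*v)^k) * (Q^(k+2) * Q^k)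
          = ((1-v)^(k+2) * Q^(k+2)) * ((1+(k:ℝ)*v)^k * Q^k) := by ring
      rw [e, ← mul_pow, ← mul_pow, evQ, eBQ, mul_pow]
    have L3 : (1+(k:ℝ)*v)^(k+2) * Q^(2*k+2) = P^(k+2) * Q^k := by
      rw [hsplit, ← mul_assoc, ← mul_pow, eBQ]
    have L4 : (1+(k:ℝ)*v)^k * Q^(2*k+2) = P^k * Q^(k+2) := by
      have hsplit' : Q^(2*k+2) = Q^k * Q^(k+2) := by rw [← pow_add]; congr 1; omega
      rw [hsplit', ← mul_assoc, ← mul_pow, eBQ]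
    have L5 : (((k:ℝ)+2)*(2*(k:ℝ)+1) * v^2 * (1+(k:ℝ)*v)^k) * Q^(2*k+2)
        = ((k:ℝ)+2)*(2*(k:ℝ)+1)*(1-x)^2 * (P^k * Q^k) := by
      rw [hsplit2]
      have e : (((k:ℝ)+2)*(2*(k:ℝ)+1) * v^2 * (1+(k:ℝ)*v)^k) * (Q^2 * (Q^k * Q^k))
          = ((k:ℝ)+2)*(2*(k:ℝ)+1) * ((v*Q)^2) * (((1+(k:ℝ)*v)*Q)^k * Q^k) := by
        rw [mul_pow, mul_pow]; ring
      rw [e, evQ2, eBQ]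
    calc ((k:ℝ)+2)^(k+2) * Q^k + ((k:ℝ)+2)^(k+2) * x^(k+2) * P^k
        = ((1+(k:ℝ)*v+v)^(k+2) + (1-v)^(k+2) * (1+(k:ℝ)*v)^k) * Q^(2*k+2) := by
          rw [add_mul, L1, L2]
      _ < ((1+(k:ℝ)*v)^(k+2) + (1+(k:ℝ)*v)^k
            + ((k:ℝ)+2)*(2*(k:ℝ)+1) * v^2 * (1+(k:ℝ)*v)^k) * Q^(2*k+2) := by
          exact hmul
      _ = P^(k+2) * Q^k + P^k * Q^(k+2) + ((k:ℝ)+2)*(2*(k:ℝ)+1)*(1-x)^2 * (P^k * Q^k) := by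
          rw [add_mul, add_mul, L3, L4, L5]
      _ = (P * Q)^k * (P^2 + Q^2 + ((k:ℝ)+2)*(2*(k:ℝ)+1)*(1-x)^2) := hexpand.symm
  · -- x > 1 : v = (x-1)/P
    set v : ℝ := (x-1)/P with hv_def
    have hv : 0 < v := div_pos (by linarith) hP
    have hv1 : v ≤ 1 := by
      rw [hv_def, div_le_one hP, hP_def]; linarith
    have hEkey := Ekey k hk v hv hv1
    have eAP : (1+(k:ℝ)*v+v)*P = ((k:ℝ)+2)*x := by
      rw [hv_def]; field_simp; rw [hP_def]; ring
    have eBP : (1+(k:ℝ)*v)*P = Q := by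
      rw [hv_def]; field_simp; rw [hQ_def, hP_def]; ring
    have evP : (1-v)*P = (k:ℝ)+2 := by
      rw [hv_def]; field_simp; rw [hP_def]; ring
    have evP2 : v*P = x-1 := by
      rw [hv_def]; field_simp
    have hsplit : P^(2*k+2) = P^(k+2) * P^k := by rw [← pow_add]; congr 1; omega
    have hsplit2 : P^(2*k+2) = P^2 * (P^k * P^k) := by
      rw [← pow_add, ← pow_add]; congr 1; omega
    have hmul := mul_lt_mul_of_pos_right hEkey (pow_pos hP (2*k+2))
    have L1 : (1+(k:ℝ)*v+v)^(k+2) * P^(2*k+2) = ((k:ℝ)+2)^(k+2) * x^(k+2) * P^k := by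
      rw [hsplit, ← mul_assoc, ← mul_pow, eAP, mul_pow]
    have L2 : ((1-v)^(k+2) * (1+(k:ℝ)*v)^k) * P^(2*k+2) = ((k:ℝ)+2)^(k+2) * Q^k := by
      rw [hsplit]
      have e : ((1-v)^(k+2) * (1+(k:ℝ)*v)^k) * (P^(k+2) * P^k)
          = ((1-v)^(k+2) * P^(k+2)) * ((1+(k:ℝ)*v)^k * P^k) := by ring
      rw [e, ← mul_pow, ← mul_pow, evP, eBP]
    have L3 : (1+(k:ℝ)*v)^(k+2) * P^(2*k+2) = Q^(k+2) * P^k := by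
      rw [hsplit, ← mul_assoc, ← mul_pow, eBP]
    have L4 : (1+(k:ℝ)*v)^k * P^(2*k+2) = Q^k * P^(k+2) := by
      have hsplit' : P^(2*k+2) = P^k * P^(k+2) := by rw [← pow_add]; congr 1; omega
      rw [hsplit', ← mul_assoc, ← mul_pow, eBP]
    have L5 : (((k:ℝ)+2)*(2*(k:ℝ)+1) * v^2 * (1+(k:ℝ)*v)^k) * P^(2*k+2)
        = ((k:ℝ)+2)*(2*(k:ℝ)+1)*(1-x)^2 * (P^k * Q^k) := by
      rw [hsplit2]
      have e : (((k:ℝ)+2)*(2*(k:ℝ)+1) * v^2 * (1+(k:ℝ)*v)^k) * (P^2 * (P^k * P^k))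
          = ((k:ℝ)+2)*(2*(k:ℝ)+1) * ((v*P)^2) * (((1+(k:ℝ)*v)*P)^k * P^k) := by
        rw [mul_pow, mul_pow]; ring
      rw [e, evP2, eBP]
      ring
    calc ((k:ℝ)+2)^(k+2) * Q^k + ((k:ℝ)+2)^(k+2) * x^(k+2) * P^k
        = ((1+(k:ℝ)*v+v)^(k+2) + (1-v)^(k+2) * (1+(k:ℝ)*v)^k) * P^(2*k+2) := by
          rw [add_mul, L1, L2]
          ring
      _ < ((1+(k:ℝ)*v)^(k+2) + (1+(k:ℝ)*v)^k
            + ((k:ℝ)+2)*(2*(k:ℝ)+1) * v^2 * (1+(k:ℝ)*v)^k) * P^(2*k+2) := hmul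
      _ = P^(k+2) * Q^k + P^k * Q^(k+2) + ((k:ℝ)+2)*(2*(k:ℝ)+1)*(1-x)^2 * (P^k * Q^k) := by
          rw [add_mul, add_mul, L3, L4, L5]
          ring
      _ = (P * Q)^k * (P^2 + Q^2 + ((k:ℝ)+2)*(2*(k:ℝ)+1)*(1-x)^2) := hexpand.symm

lemma Tneg' (k : ℕ) (hk : 1 ≤ k) (x : ℝ) (hx : 0 ≤ x) (hx1 : x ≠ 1)
    (P Q m c : ℝ) (e : ℕ)
    (hP : P = (k:ℝ)+1+x) (hQ : Q = 1+((k:ℝ)+1)*x) (hm : m = (k:ℝ)+2)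
    (hc : c = ((k:ℝ)+2)*(2*(k:ℝ)+1)) (he : e = k+2) :
    m^e * Q^k + m^e * x^e * P^k < (P*Q)^k * (P^2+Q^2+c*(1-x)^2) := by
  subst hP hQ hm hc he
  exact Tneg k hk x hx hx1

/-- the binomial-sum form of the algebraic inequality, with equality
exactly at `x = 1`. -/
theorem binomial_sum_inequality (n : ℕ) (hn : 2 ≤ n) (x : ℝ) (hx : 0 ≤ x) :
    (∑ k ∈ Finset.Icc 3 (n + 1), (Nat.choose (n + 1) k : ℝ) *
        (1 / ((n : ℝ) + x) ^ (k - 2) + (-1) ^ k / (1 + (n : ℝ) * x) ^ (k - 2)) *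
        (1 - x) ^ k) ≤ 0 ∧
    ((∑ k ∈ Finset.Icc 3 (n + 1), (Nat.choose (n + 1) k : ℝ) *
        (1 / ((n : ℝ) + x) ^ (k - 2) + (-1) ^ k / (1 + (n : ℝ) * x) ^ (k - 2)) *
        (1 - x) ^ k) = 0 ↔ x = 1) := by
  obtain ⟨j, rfl⟩ : ∃ j, n = j + 2 := ⟨n - 2, by omega⟩
  set P : ℝ := ((j + 2 : ℕ) : ℝ) + x with hP_def
  set Q : ℝ := 1 + ((j + 2 : ℕ) : ℝ) * x with hQ_def
  have hPpos : (0:ℝ) < P := by rw [hP_def]; push_cast; positivity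
  have hQpos : (0:ℝ) < Q := by rw [hQ_def]; push_cast; positivity
  have hPne : P ≠ 0 := ne_of_gt hPpos
  have hQne : Q ≠ 0 := ne_of_gt hQpos
  set S : ℝ := ∑ k ∈ Finset.Icc 3 (j + 2 + 1), (Nat.choose (j + 2 + 1) k : ℝ) *
        (1 / P ^ (k - 2) + (-1) ^ k / Q ^ (k - 2)) * (1 - x) ^ k with hS_def
  -- choose 2 cast
  have hC2 : (((j + 3).choose 2 : ℕ) : ℝ) = ((j:ℝ)+3) * ((j:ℝ)+2) / 2 := by
    have hdvd : 2 ∣ (j + 3) * (j + 2) := by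
      rcases Nat.even_or_odd j with he | ho
      · obtain ⟨m, rfl⟩ := he; exact ⟨(m + m + 3) * (m + 1), by ring⟩
      · obtain ⟨m, rfl⟩ := ho; exact ⟨(m + 2) * (2 * m + 3), by ring⟩
    have h : (j + 3).choose 2 * 2 = (j + 3) * (j + 2) := by
      rw [Nat.choose_two_right]
      show (j + 3) * (j + 3 - 1) / 2 * 2 = (j + 3) * (j + 2)
      rw [show j + 3 - 1 = j + 2 from rfl]
      exact Nat.div_mul_cancel hdvd
    have := congrArg (Nat.cast (R := ℝ)) h
    push_cast at this
    linarith
  -- the transformed sum identity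
  have hST : S * (P * Q) ^ (j + 1)
      = ((j:ℝ)+3)^(j+3) * Q^(j+1) + ((j:ℝ)+3)^(j+3) * x^(j+3) * P^(j+1)
        - (P*Q)^(j+1) * (P^2 + Q^2 + ((j:ℝ)+3)*(2*(j:ℝ)+3)*(1-x)^2) := by
    rw [hS_def, Finset.sum_mul]
    have hterm : ∀ kk ∈ Finset.Icc 3 (j + 2 + 1),
        (Nat.choose (j + 2 + 1) kk : ℝ) *
          (1 / P ^ (kk - 2) + (-1) ^ kk / Q ^ (kk - 2)) * (1 - x) ^ kk * (P * Q) ^ (j + 1)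
        = ((Nat.choose (j + 3) kk : ℝ) * ((1 - x) ^ kk * P ^ (j + 3 - kk))) * Q ^ (j + 1)
          + ((Nat.choose (j + 3) kk : ℝ) * ((x - 1) ^ kk * Q ^ (j + 3 - kk))) * P ^ (j + 1) := by
      intro kk hkk
      obtain ⟨h3, hk3⟩ := Finset.mem_Icc.mp hkk
      have hPk : P ^ (j + 1) = P ^ (kk - 2) * P ^ (j + 3 - kk) := by
        rw [← pow_add]; congr 1; omega
      have hQk : Q ^ (j + 1) = Q ^ (kk - 2) * Q ^ (j + 3 - kk) := by
        rw [← pow_add]; congr 1; omega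
      have hneg : (x - 1) ^ kk = (-1:ℝ) ^ kk * (1 - x) ^ kk := by
        rw [← mul_pow]; congr 1; ring
      simp only [show j + 2 + 1 = j + 3 from rfl]
      rw [hneg, mul_pow, hPk, hQk]
      field_simp
    rw [Finset.sum_congr rfl hterm, Finset.sum_add_distrib, ← Finset.sum_mul, ← Finset.sum_mul]
    -- binomial sums
    have hIcc : Finset.Icc 3 (j + 2 + 1) = Finset.Ico 3 (j + 3 + 1) := by
      rw [show j + 2 + 1 = j + 3 from rfl, Finset.Ico_add_one_right_eq_Icc]
    have hsplit : ∀ f : ℕ → ℝ, (∑ kk ∈ Finset.range (j + 3 + 1), f kk)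
        = (f 0 + f 1 + f 2) + ∑ kk ∈ Finset.Ico 3 (j + 3 + 1), f kk := by
      intro f
      rw [Finset.range_eq_Ico]
      rw [← Finset.sum_Ico_consecutive f (Nat.zero_le 3) (by omega : 3 ≤ j + 3 + 1)]
      congr 1
      rw [← Finset.range_eq_Ico]
      simp [Finset.sum_range_succ]
    have hbinP : (∑ kk ∈ Finset.range (j + 3 + 1),
        (Nat.choose (j + 3) kk : ℝ) * ((1 - x) ^ kk * P ^ (j + 3 - kk))) = ((j:ℝ)+3)^(j+3) := by
      have hap := add_pow (1 - x) P (j + 3)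
      have hsum : (1 - x) + P = (j:ℝ) + 3 := by rw [hP_def]; push_cast; ring
      rw [hsum] at hap
      calc (∑ kk ∈ Finset.range (j + 3 + 1),
          (Nat.choose (j + 3) kk : ℝ) * ((1 - x) ^ kk * P ^ (j + 3 - kk)))
          = ∑ kk ∈ Finset.range (j + 3 + 1), (1 - x) ^ kk * P ^ (j + 3 - kk) * ((j + 3).choose kk : ℝ) :=
            Finset.sum_congr rfl (fun i _ => by ring)
        _ = ((j:ℝ)+3)^(j+3) := hap.symm
    have hbinQ : (∑ kk ∈ Finset.range (j + 3 + 1),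
        (Nat.choose (j + 3) kk : ℝ) * ((x - 1) ^ kk * Q ^ (j + 3 - kk)))
        = ((j:ℝ)+3)^(j+3) * x^(j+3) := by
      have hap := add_pow (x - 1) Q (j + 3)
      have hsum : (x - 1) + Q = ((j:ℝ) + 3) * x := by rw [hQ_def]; push_cast; ring
      rw [hsum] at hap
      rw [mul_pow] at hap
      calc (∑ kk ∈ Finset.range (j + 3 + 1),
          (Nat.choose (j + 3) kk : ℝ) * ((x - 1) ^ kk * Q ^ (j + 3 - kk)))
          = ∑ kk ∈ Finset.range (j + 3 + 1), (x - 1) ^ kk * Q ^ (j + 3 - kk) * ((j + 3).choose kk : ℝ) :=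
            Finset.sum_congr rfl (fun i _ => by ring)
        _ = ((j:ℝ)+3)^(j+3) * x^(j+3) := hap.symm
    have eP := hsplit (fun kk => (Nat.choose (j + 3) kk : ℝ) * ((1 - x) ^ kk * P ^ (j + 3 - kk)))
    have eQ := hsplit (fun kk => (Nat.choose (j + 3) kk : ℝ) * ((x - 1) ^ kk * Q ^ (j + 3 - kk)))
    rw [hbinP] at eP
    rw [hbinQ] at eQ
    simp only [Nat.choose_zero_right, Nat.choose_one_right] at eP eQ
    rw [hIcc]
    have hP3 : P ^ (j + 3 - 0) = P ^ (j+1) * P^2 := by rw [← pow_add]; congr 1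
    have hP2 : P ^ (j + 3 - 1) = P ^ (j+1) * P := by rw [← pow_succ]; congr 1
    have hP1 : P ^ (j + 3 - 2) = P ^ (j+1) := by congr 1
    have hQ3 : Q ^ (j + 3 - 0) = Q ^ (j+1) * Q^2 := by rw [← pow_add]; congr 1
    have hQ2 : Q ^ (j + 3 - 1) = Q ^ (j+1) * Q := by rw [← pow_succ]; congr 1
    have hQ1 : Q ^ (j + 3 - 2) = Q ^ (j+1) := by congr 1
    rw [hP3, hP2, hP1] at eP
    rw [hQ3, hQ2, hQ1] at eQ
    rw [hC2] at eP eQ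
    -- now solve for the Ico sums and substitute
    have eP' : (∑ kk ∈ Finset.Ico 3 (j + 3 + 1),
        (Nat.choose (j + 3) kk : ℝ) * ((1 - x) ^ kk * P ^ (j + 3 - kk)))
        = ((j:ℝ)+3)^(j+3) - (1 * ((1 - x) ^ 0 * (P ^ (j+1) * P^2))
            + ((j:ℝ) + 3) * ((1 - x) ^ 1 * (P ^ (j+1) * P))
            + (((j:ℝ)+3) * ((j:ℝ)+2) / 2) * ((1 - x) ^ 2 * P ^ (j+1))) := by
      push_cast at eP ⊢
      linarith [eP]
    have eQ' : (∑ kk ∈ Finset.Ico 3 (j + 3 + 1),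
        (Nat.choose (j + 3) kk : ℝ) * ((x - 1) ^ kk * Q ^ (j + 3 - kk)))
        = ((j:ℝ)+3)^(j+3) * x^(j+3) - (1 * ((x - 1) ^ 0 * (Q ^ (j+1) * Q^2))
            + ((j:ℝ) + 3) * ((x - 1) ^ 1 * (Q ^ (j+1) * Q))
            + (((j:ℝ)+3) * ((j:ℝ)+2) / 2) * ((x - 1) ^ 2 * Q ^ (j+1))) := by
      push_cast at eQ ⊢
      linarith [eQ]
    rw [eP', eQ']
    have hPQ : P - Q = ((j:ℝ)+1) * (1 - x) := by
      rw [hP_def, hQ_def]; push_cast; ring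
    rw [mul_pow]
    have hPQ' : P = Q + ((j:ℝ)+1) * (1 - x) := by linarith [hPQ]
    rw [hPQ']
    ring
  -- conclude
  have hM : (0:ℝ) < (P * Q) ^ (j + 1) := pow_pos (mul_pos hPpos hQpos) _
  by_cases hx1 : x = 1
  · subst hx1
    have hS0 : S = 0 := by
      rw [hS_def]
      apply Finset.sum_eq_zero
      intro kk hkk
      have h3 := (Finset.mem_Icc.mp hkk).1
      have : (1:ℝ) - 1 = 0 := by ring
      rw [this, zero_pow (by omega : kk ≠ 0), mul_zero]
    exact ⟨le_of_eq hS0, by simp [hS0]⟩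
  · have h1 : P = ((j+1:ℕ):ℝ)+1+x := by rw [hP_def]; push_cast; ring
    have h2 : Q = 1+(((j+1:ℕ):ℝ)+1)*x := by rw [hQ_def]; push_cast; ring
    have h3 : ((j:ℝ)+3) = ((j+1:ℕ):ℝ)+2 := by push_cast; ring
    have h4 : ((j:ℝ)+3)*(2*(j:ℝ)+3) = (((j+1:ℕ):ℝ)+2)*(2*((j+1:ℕ):ℝ)+1) := by push_cast; ring
    have h5 : j + 3 = (j+1)+2 := rfl
    have hT := Tneg' (j+1) (by omega) x hx hx1 P Q ((j:ℝ)+3) (((j:ℝ)+3)*(2*(j:ℝ)+3)) (j+3)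
      h1 h2 h3 h4 h5
    have hTS : S * (P * Q) ^ (j + 1) < 0 := by
      rw [hST]
      linarith [hT]
    have hSlt : S < 0 := by
      by_contra h
      push_neg at h
      have := mul_nonneg h (le_of_lt hM)
      linarith
    refine ⟨le_of_lt hSlt, ⟨fun h0 => absurd h0 (ne_of_lt hSlt), fun hx1' => absurd hx1' hx1⟩⟩
end

section
/- For every integer n ≥ 2 and every real y, 𝒫_n(y) · 𝒫_n(−y) = (4(n−1)y² + n²)^{(2−n)/2}; in particular 𝒫_n(y) · 𝒫_n(−y) ≤ n^{2−n}. -/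
noncomputable section

/-- `𝒫_n(y)·𝒫_n(-y) = (4(n-1)y² + n²)^{(2-n)/2} ≤ n^{2-n}`. -/
theorem P_mul_P_neg (n : ℕ) (hn : 2 ≤ n) (y : ℝ) :
    P n y * P n (-y) = (4 * ((n : ℝ) - 1) * y ^ 2 + (n : ℝ) ^ 2) ^ ((2 - (n : ℝ)) / 2) ∧
    P n y * P n (-y) ≤ (n : ℝ) ^ (2 - (n : ℝ)) := by
  have hn1 : (1 : ℝ) ≤ (n : ℝ) - 1 := by
    have : (2 : ℝ) ≤ (n : ℝ) := by exact_mod_cast hn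
    linarith
  set s := Real.sqrt (1 + y ^ 2) with hs
  have hsq : s ^ 2 = 1 + y ^ 2 := Real.sq_sqrt (by positivity)
  have hys : |y| < s := by
    rw [hs, ← Real.sqrt_sq_eq_abs]
    exact Real.sqrt_lt_sqrt (by positivity) (by linarith)
  have ha : 0 < s + y := by
    cases abs_lt.mp hys with
    | intro h1 h2 => linarith
  have hb : 0 < s - y := by
    cases abs_lt.mp hys with
    | intro h1 h2 => linarith
  have hab : (s + y) * (s - y) = 1 := by nlinarith [hsq]
  set A := 1 + ((n : ℝ) - 1) * (s + y) ^ 2 with hA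
  set B := 1 + ((n : ℝ) - 1) * (s - y) ^ 2 with hB
  have hApos : 0 < A := by nlinarith [sq_nonneg (s + y)]
  have hBpos : 0 < B := by nlinarith [sq_nonneg (s - y)]
  have hABval : A * B = 4 * ((n : ℝ) - 1) * y ^ 2 + (n : ℝ) ^ 2 := by
    have h2 : (s + y) ^ 2 + (s - y) ^ 2 = 2 + 4 * y ^ 2 := by nlinarith [hsq]
    have h3 : ((s + y) * (s - y)) ^ 2 = 1 := by rw [hab]; norm_num
    rw [hA, hB]
    linear_combination ((n : ℝ) - 1) * h2 + ((n : ℝ) - 1) ^ 2 * h3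
  have hABpos : 0 < A * B := mul_pos hApos hBpos
  set e := (((n : ℝ)) - 2) / 2 with he
  have hPy : P n y = (s + y) ^ (n - 1) / A ^ e := rfl
  have hPny : P n (-y) = (s - y) ^ (n - 1) / B ^ e := by
    unfold P
    rw [neg_pow, show ((-1:ℝ))^2 = 1 by norm_num, one_mul]
    rw [hB, he, hs]
    ring_nf
  have key : P n y * P n (-y) = ((A * B) ^ e)⁻¹ := by
    rw [hPy, hPny, div_mul_div_comm, ← mul_pow, hab, one_pow,
      ← Real.mul_rpow hApos.le hBpos.le, one_div]
  have heq : P n y * P n (-y)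
      = (4 * ((n : ℝ) - 1) * y ^ 2 + (n : ℝ) ^ 2) ^ ((2 - (n : ℝ)) / 2) := by
    rw [key, ← hABval, show (2 - (n : ℝ)) / 2 = -e by rw [he]; ring,
      Real.rpow_neg hABpos.le]
  refine ⟨heq, ?_⟩
  rw [heq]
  have hnpos : (0 : ℝ) < (n : ℝ) ^ 2 := by positivity
  have hnn : (0 : ℝ) < (n : ℝ) := by positivity
  have hle : ((n : ℝ) ^ 2) ≤ 4 * ((n : ℝ) - 1) * y ^ 2 + (n : ℝ) ^ 2 := by nlinarith
  have hz : (2 - (n : ℝ)) / 2 ≤ 0 := by linarith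
  calc (4 * ((n : ℝ) - 1) * y ^ 2 + (n : ℝ) ^ 2) ^ ((2 - (n : ℝ)) / 2)
      ≤ ((n : ℝ) ^ 2) ^ ((2 - (n : ℝ)) / 2) :=
        Real.rpow_le_rpow_of_nonpos hnpos hle hz
    _ = (n : ℝ) ^ (2 - (n : ℝ)) := by
        rw [← Real.rpow_natCast (n : ℝ) 2, ← Real.rpow_mul hnn.le]
        congr 1; ring
end
end

section
/- For every integer n ≥ 2 and every real y ≥ 0, (𝒫_n(y) + 𝒫_n(−y))² ≤ (4 / n^{n−2}) · (1 + ((n−1)(3n−2)/n²) · y²). -/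
noncomputable section

/-- Lemma A: `(1+e)^m ≤ 1 + m e + (m(m-1)/2) e² (1+e)^m` for `e ≥ 0`. -/
lemma lemA (m : ℕ) (e : ℝ) (he : 0 ≤ e) :
    (1+e)^m ≤ 1 + m*e + ((m:ℝ)*((m:ℝ)-1)/2)*e^2*(1+e)^m := by
  induction m with
  | zero => simp
  | succ m ih =>
    have hpow : (1:ℝ) ≤ (1+e)^(m+1) := one_le_pow₀ (by linarith)
    have hpos : (0:ℝ) ≤ (1+e)^m := by positivity
    have h1 : (1+e)^(m+1) = (1+e)^m * (1+e) := by ring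
    have h2 : (1+e)^m * (1+e) ≤ (1 + m*e + ((m:ℝ)*((m:ℝ)-1)/2)*e^2*(1+e)^m) * (1+e) := by
      apply mul_le_mul_of_nonneg_right ih (by linarith)
    have h3 : (1 + m*e + ((m:ℝ)*((m:ℝ)-1)/2)*e^2*(1+e)^m) * (1+e)
        = 1 + ((m:ℝ)+1)*e + (m:ℝ)*e^2 + ((m:ℝ)*((m:ℝ)-1)/2)*e^2*(1+e)^(m+1) := by
      rw [h1]; ring
    have h4 : (m:ℝ)*e^2 ≤ (m:ℝ)*e^2*(1+e)^(m+1) := by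
      nlinarith [mul_nonneg (mul_nonneg (Nat.cast_nonneg m : (0:ℝ) ≤ m) (sq_nonneg e)) (sub_nonneg.mpr hpow)]
    push_cast
    nlinarith [h2, h3, h4]

/-- Lemma B: key lower bound `(1+((k+1)/2)e)((1-ke+(k(k+1)/2)e²)(1+e)^k - 1) ≥ C(k+2,3) e³ (1+e)^k`. -/
lemma lemB (k : ℕ) (e : ℝ) (he : 0 ≤ e) :
    ((k:ℝ)*((k:ℝ)+1)*((k:ℝ)+2)/6)*e^3*(1+e)^k ≤
      (1+(((k:ℝ)+1)/2)*e)*((1-(k:ℝ)*e+((k:ℝ)*((k:ℝ)+1)/2)*e^2)*(1+e)^k - 1) := by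
  induction k with
  | zero => norm_num
  | succ k ih =>
    have hA := lemA (k+1) e he
    have h1e : (0:ℝ) ≤ 1+e := by linarith
    have ih' := mul_le_mul_of_nonneg_left ih h1e
    have hA' := mul_le_mul_of_nonneg_left hA (show (0:ℝ) ≤ e/2 by linarith)
    push_cast at ih' hA' ⊢
    rw [show (1+e)^(k+1) = (1+e)^k*(1+e) from pow_succ _ _] at hA' ⊢
    nlinarith [ih', hA']

/-- Lemma C: quartic upper bound for `(1-u)^{-k}` on `u(k+2) ≤ 1`. -/
lemma lemC : ∀ (k : ℕ) (u : ℝ), 0 ≤ u → u*((k:ℝ)+2) ≤ 1 →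
    1 ≤ (1 + (k:ℝ)*u + ((k:ℝ)*((k:ℝ)+1)/2)*u^2 + ((k:ℝ)*((k:ℝ)+1)*((k:ℝ)+2)/6)*u^3
        + ((k:ℝ)*((k:ℝ)+1)*((k:ℝ)+2)*((k:ℝ)+3)/12)*u^4) * (1-u)^k := by
  intro k
  induction k with
  | zero => intro u hu h; norm_num
  | succ k ih =>
    intro u hu h
    push_cast at h ⊢
    have IH := ih u hu (by push_cast; nlinarith)
    have h1u : (0:ℝ) ≤ 1 - u := by nlinarith
    have key : (0:ℝ) ≤ u^4*((((k:ℝ)+1)*((k:ℝ)+2)*((k:ℝ)+3)))*(2 - ((k:ℝ)+4)*u) := by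
      apply mul_nonneg (mul_nonneg (pow_nonneg hu 4) (by positivity))
      nlinarith
    have hpk : (1 + (k:ℝ)*u + ((k:ℝ)*((k:ℝ)+1)/2)*u^2 + ((k:ℝ)*((k:ℝ)+1)*((k:ℝ)+2)/6)*u^3
        + ((k:ℝ)*((k:ℝ)+1)*((k:ℝ)+2)*((k:ℝ)+3)/12)*u^4) ≤
        (1 + ((k:ℝ)+1)*u + (((k:ℝ)+1)*((k:ℝ)+2)/2)*u^2 + (((k:ℝ)+1)*((k:ℝ)+2)*((k:ℝ)+3)/6)*u^3
        + (((k:ℝ)+1)*((k:ℝ)+2)*((k:ℝ)+3)*((k:ℝ)+4)/12)*u^4) * (1-u) := by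
      nlinarith [key]
    rw [show (1 + ((k:ℝ)+1)*u + (((k:ℝ)+1)*(((k:ℝ)+1)+1)/2)*u^2 + (((k:ℝ)+1)*(((k:ℝ)+1)+1)*(((k:ℝ)+1)+2)/6)*u^3
        + (((k:ℝ)+1)*(((k:ℝ)+1)+1)*(((k:ℝ)+1)+2)*(((k:ℝ)+1)+3)/12)*u^4) * (1-u)^(k+1)
      = (1 + ((k:ℝ)+1)*u + (((k:ℝ)+1)*((k:ℝ)+2)/2)*u^2 + (((k:ℝ)+1)*((k:ℝ)+2)*((k:ℝ)+3)/6)*u^3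
        + (((k:ℝ)+1)*((k:ℝ)+2)*((k:ℝ)+3)*((k:ℝ)+4)/12)*u^4) * (1-u)^(k+1) from by ring]
    calc (1:ℝ) ≤ (1 + (k:ℝ)*u + ((k:ℝ)*((k:ℝ)+1)/2)*u^2 + ((k:ℝ)*((k:ℝ)+1)*((k:ℝ)+2)/6)*u^3
        + ((k:ℝ)*((k:ℝ)+1)*((k:ℝ)+2)*((k:ℝ)+3)/12)*u^4) * (1-u)^k := IH
      _ ≤ ((1 + ((k:ℝ)+1)*u + (((k:ℝ)+1)*((k:ℝ)+2)/2)*u^2 + (((k:ℝ)+1)*((k:ℝ)+2)*((k:ℝ)+3)/6)*u^3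
        + (((k:ℝ)+1)*((k:ℝ)+2)*((k:ℝ)+3)*((k:ℝ)+4)/12)*u^4) * (1-u)) * (1-u)^k := by
          apply mul_le_mul_of_nonneg_right hpk (by positivity)
      _ = (1 + ((k:ℝ)+1)*u + (((k:ℝ)+1)*((k:ℝ)+2)/2)*u^2 + (((k:ℝ)+1)*((k:ℝ)+2)*((k:ℝ)+3)/6)*u^3
        + (((k:ℝ)+1)*((k:ℝ)+2)*((k:ℝ)+3)*((k:ℝ)+4)/12)*u^4) * (1-u)^(k+1) := by ring

/-- Main polynomial inequality. -/
lemma star (k : ℕ) (d : ℝ) (hd : 0 ≤ d) :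
    ((k:ℝ)+2)^k * (1+d)^(k+2) * ((k:ℝ)+2+d)^k + ((k:ℝ)+2)^k * ((k:ℝ)+2+((k:ℝ)+1)*d)^k
      ≤ (2*(1+d) + ((k:ℝ)+1)*(3*(k:ℝ)+4)*d^2/((k:ℝ)+2)^2) *
        ((((k:ℝ)+2+d) * ((k:ℝ)+2+((k:ℝ)+1)*d)))^k := by
  have hK : (0:ℝ) ≤ (k:ℝ) := Nat.cast_nonneg k
  set K := (k:ℝ) with hKdef
  set N := K+2 with hNdef
  have hN : 0 < N := by rw [hNdef]; linarith
  set x := 1+d with hxdef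
  have hx : 0 < x := by rw [hxdef]; linarith
  have hx1 : 1 ≤ x := by rw [hxdef]; linarith
  have hxd : d ≤ x := by rw [hxdef]; linarith
  set A := N + d with hAdef
  set B := N + (K+1)*d with hBdef
  have hA : 0 < A := by rw [hAdef]; linarith
  have hB : 0 < B := by
    have : 0 ≤ (K+1)*d := by positivity
    rw [hBdef]; linarith
  set e := d/N with hedef
  have he : 0 ≤ e := by positivity
  have hde : d = N*e := by rw [hedef]; field_simp
  set u := d/(N*x) with hudef
  have hu : 0 ≤ u := by positivity
  have hue : u*x = e := by rw [hudef, hedef]; field_simp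
  have hueq : u*(K+2) = d/x := by
    rw [hudef, ← hNdef]
    field_simp
  have hcond : u*(K+2) ≤ 1 := by
    rw [hueq, div_le_one hx]; exact hxd
  have hC := lemC k u hu hcond
  have h1u : (1:ℝ)-u = B/(N*x) := by
    rw [hudef, hBdef, hxdef, hNdef]
    field_simp
    ring
  set p := 1 + K*u + (K*(K+1)/2)*u^2 + (K*(K+1)*(K+2)/6)*u^3
      + (K*(K+1)*(K+2)*(K+3)/12)*u^4 with hpdef
  have hppos : 0 ≤ p := by rw [hpdef]; positivity
  have hC2 : (N*x)^k ≤ p*B^k := by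
    rw [h1u, div_pow] at hC
    have hpos : (0:ℝ) < (N*x)^k := by positivity
    calc (N*x)^k = 1*(N*x)^k := (one_mul _).symm
      _ ≤ (p*(B^k/(N*x)^k))*(N*x)^k := mul_le_mul_of_nonneg_right hC (le_of_lt hpos)
      _ = p*B^k := by field_simp
  have hBineq := lemB k e he
  set Q := 1-K*e+(K*(K+1)/2)*e^2 with hQdef
  set γ := (K+1)/2 with hgdef
  have hγpos : 0 < 1+γ*e := by
    have : 0 ≤ γ*e := by rw [hgdef]; positivity
    linarith
  have hAe : A = N*(1+e) := by rw [hAdef, hde]; ring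
  have h2 : (1+γ*e) ≤ ((1+γ*e)*Q - (K*(K+1)*(K+2)/6)*e^3)*(1+e)^k := by
    have hArr : ((1+γ*e)*Q - (K*(K+1)*(K+2)/6)*e^3)*(1+e)^k
        = (1+γ*e)*(Q*(1+e)^k-1) - (K*(K+1)*(K+2)/6)*e^3*(1+e)^k + (1+γ*e) := by ring
    rw [hArr]
    linarith [hBineq]
  have h4 : (1+γ*e)*((N^k)*B^k) ≤ ((1+γ*e)*Q - (K*(K+1)*(K+2)/6)*e^3)*(A^k*B^k) := by
    calc (1+γ*e)*((N^k)*B^k)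
        ≤ ((((1+γ*e)*Q - (K*(K+1)*(K+2)/6)*e^3)*(1+e)^k))*((N^k)*B^k) := by
          apply mul_le_mul_of_nonneg_right h2 (by positivity)
      _ = ((1+γ*e)*Q - (K*(K+1)*(K+2)/6)*e^3)*(A^k*B^k) := by
          rw [hAe, mul_pow]; ring
  have hxe : x = 1 + (K+2)*e := by rw [hxdef, hde, hNdef]
  have hpu : p*x^4 = x^4 + K*e*x^3 + (K*(K+1)/2)*e^2*x^2 + (K*(K+1)*(K+2)/6)*e^3*x
      + (K*(K+1)*(K+2)*(K+3)/12)*e^4 := by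
    rw [hpdef, ← hue]; ring
  have h5 : (1+γ*e)*(p*x^4)
      + ((1+γ*e)*Q - (K*(K+1)*(K+2)/6)*e^3)*x^2
      ≤ (1+γ*e)*(2*x + (K+1)*(3*K+4)*e^2)*x^2 := by
    have h0 : 0 ≤ (K*(K+1)*(K+2)*(K+3)^2/24)*e^5 := by positivity
    have hdiff : (1+γ*e)*(2*x + (K+1)*(3*K+4)*e^2)*x^2
        - ((1+γ*e)*(p*x^4) + ((1+γ*e)*Q - (K*(K+1)*(K+2)/6)*e^3)*x^2)
        = (K*(K+1)*(K+2)*(K+3)^2/24)*e^5 := by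
      rw [hpu, hQdef, hgdef, hxe]; ring
    linarith
  -- final assembly
  have hcoef : (K+1)*(3*K+4)*d^2/(K+2)^2 = (K+1)*(3*K+4)*e^2 := by
    rw [hde, hNdef]; field_simp
  rw [hcoef]
  have hgpos : (0:ℝ) < (1+γ*e)*x^2 := by positivity
  apply le_of_mul_le_mul_left _ hgpos
  have hABk : (0:ℝ) ≤ (A*B)^k := by positivity
  calc ((1+γ*e)*x^2)*(N^k * x^(k+2) * A^k + N^k * B^k)
      = (1+γ*e)*(x^4*A^k)*(N*x)^k + x^2*((1+γ*e)*((N^k)*B^k)) := by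
        rw [mul_pow]; rw [show x^(k+2) = x^k*x^2 from by rw [pow_add]]; ring
    _ ≤ (1+γ*e)*(x^4*A^k)*(p*B^k) + x^2*(((1+γ*e)*Q - (K*(K+1)*(K+2)/6)*e^3)*(A^k*B^k)) := by
        apply add_le_add
        · apply mul_le_mul_of_nonneg_left hC2 (by positivity)
        · apply mul_le_mul_of_nonneg_left h4 (by positivity)
    _ = ((1+γ*e)*(p*x^4) + ((1+γ*e)*Q - (K*(K+1)*(K+2)/6)*e^3)*x^2)*((A*B)^k) := by
        rw [mul_pow]; ring
    _ ≤ ((1+γ*e)*(2*x + (K+1)*(3*K+4)*e^2)*x^2)*((A*B)^k) := by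
        apply mul_le_mul_of_nonneg_right h5 hABk
    _ = ((1+γ*e)*x^2)*((2*x + (K+1)*(3*K+4)*e^2) * (A*B)^k) := by ring


/-- Final reduction step: the fraction inequality, via `star`. -/
lemma final_step (k : ℕ) (d : ℝ) (hd : 0 ≤ d) :
    (1+d)^(k+1)/(((k:ℝ)+2)+((k:ℝ)+1)*d)^k + 2*(1/((k:ℝ)+2)^k)
        + 1/((1+d)*(((k:ℝ)+2)+d)^k)
      ≤ 4/((k:ℝ)+2)^k * (1 + ((k:ℝ)+1)*(3*(k:ℝ)+4)/((k:ℝ)+2)^2 * (d^2/(4*(1+d)))) := by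
  have key := star k d hd
  have hK0 : (0:ℝ) ≤ (k:ℝ) := Nat.cast_nonneg k
  set K := (k:ℝ) with hKdef
  have h1d : (0:ℝ) < 1+d := by linarith
  have hN : (0:ℝ) < K+2 := by linarith
  have hA : (0:ℝ) < K+2+d := by linarith
  have hB : (0:ℝ) < K+2+(K+1)*d := by nlinarith
  have hNk : (0:ℝ) < (K+2)^k := by positivity
  have hAk : (0:ℝ) < (K+2+d)^k := by positivity
  have hBk : (0:ℝ) < (K+2+(K+1)*d)^k := by positivity
  set D := (K+2)^k * ((1+d) * ((K+2+d)^k * (K+2+(K+1)*d)^k)) with hDdef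
  have hD : 0 < D := by rw [hDdef]; positivity
  apply le_of_mul_le_mul_right _ hD
  have e1 : ((1+d)^(k+1)/((K+2)+(K+1)*d)^k) * D = (K+2)^k*(1+d)^(k+2)*(K+2+d)^k := by
    rw [hDdef, div_mul_eq_mul_div, div_eq_iff (ne_of_gt hBk)]
    ring
  have e2 : (2*(1/(K+2)^k)) * D = 2*(1+d)*((K+2+d)^k*(K+2+(K+1)*d)^k) := by
    rw [hDdef, mul_one_div, div_mul_eq_mul_div, div_eq_iff (ne_of_gt hNk)]
    ring
  have e3 : (1/((1+d)*((K+2)+d)^k)) * D = (K+2)^k*(K+2+(K+1)*d)^k := by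
    rw [hDdef, one_div, inv_mul_eq_div, div_eq_iff (by positivity : (1+d)*((K+2)+d)^k ≠ 0)]
    ring
  have e4 : (4/(K+2)^k * (1 + (K+1)*(3*K+4)/(K+2)^2 * (d^2/(4*(1+d))))) * D
      = (2*(1+d) + ((2*(1+d) + (K+1)*(3*K+4)*d^2/(K+2)^2))) * ((K+2+d)^k*(K+2+(K+1)*d)^k) := by
    rw [hDdef, div_mul_eq_mul_div, mul_comm, ← mul_div_assoc, div_eq_iff (ne_of_gt hNk)]
    field_simp
    ring
  rw [add_mul, add_mul, e1, e2, e3, e4]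
  have hABk : ((K+2+d)*(K+2+(K+1)*d))^k = (K+2+d)^k*(K+2+(K+1)*d)^k := mul_pow _ _ _
  rw [hABk] at key
  nlinarith [key]

/-- `(𝒫_n(y) + 𝒫_n(-y))² ≤ (4/n^{n-2})(1 + ((n-1)(3n-2)/n²) y²)`. -/
theorem P_add_P_neg_sq_le (n : ℕ) (hn : 2 ≤ n) (y : ℝ) (hy : 0 ≤ y) :
    (P n y + P n (-y)) ^ 2 ≤
      4 / (n : ℝ) ^ (n - 2) *
        (1 + ((n : ℝ) - 1) * (3 * (n : ℝ) - 2) / (n : ℝ) ^ 2 * y ^ 2) := by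
  obtain ⟨k, rfl⟩ : ∃ k, n = k + 2 := ⟨n - 2, by omega⟩
  set s := Real.sqrt (1+y^2) with hsdef
  have hs0 : 0 ≤ s := Real.sqrt_nonneg _
  have hs2 : s^2 = 1+y^2 := Real.sq_sqrt (by positivity)
  have hs1 : 1 ≤ s := by nlinarith
  set t := s + y with htdef
  set t' := s - y with ht'def
  have ht1 : 1 ≤ t := by rw [htdef]; linarith
  have ht0 : 0 < t := by linarith
  have htne : t ≠ 0 := ne_of_gt ht0
  have htt' : t*t' = 1 := by rw [htdef, ht'def]; nlinarith
  have ht'0 : 0 < t' := by nlinarith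
  have ht'eq : t' = 1/t := by rw [eq_div_iff htne]; linarith [htt', mul_comm t t']
  have ht_sub : t - t' = 2*y := by rw [htdef, ht'def]; ring
  set K := (k:ℝ) with hKdef
  have hK0 : 0 ≤ K := Nat.cast_nonneg k
  have hcast : ((k+2:ℕ):ℝ) = K+2 := by push_cast ; ring
  have hP1 : P (k+2) y = t^(k+1) / (1+(K+1)*t^2)^(K/2) := by
    unfold P
    rw [hcast]
    norm_num
    rw [← hsdef, ← htdef]
    try rw [show K+2-1 = K+1 by ring]
  have hP2 : P (k+2) (-y) = t'^(k+1) / (1+(K+1)*t'^2)^(K/2) := by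
    unfold P
    rw [hcast]
    norm_num
    rw [← hsdef, show s + -y = t' by rw [ht'def]; ring]
    try rw [show K+2-1 = K+1 by ring]
  set x := t^2 with hxdef
  have hx1 : 1 ≤ x := by rw [hxdef]; nlinarith
  have hx0 : 0 < x := by linarith
  have hxne : x ≠ 0 := ne_of_gt hx0
  set d := x - 1 with hddef
  have hd : 0 ≤ d := by rw [hddef]; linarith
  have hxd : x = 1 + d := by rw [hddef]; ring
  have ht'2 : t'^2 = 1/x := by rw [ht'eq, div_pow, one_pow, hxdef]
  have hy2 : y^2 = d^2/(4*x) := by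
    have hdt : d = 2*y*t := by
      rw [hddef, hxdef]
      linear_combination t*ht_sub + htt'
    rw [hdt, hxdef]
    field_simp
    ring
  clear_value s t t' K x d
  clear hsdef htdef ht'def hddef
  have hsq : ∀ b:ℝ, 0 < b → (b^(K/2))^2 = b^k := by
    intro b hb
    rw [pow_two, ← Real.rpow_add hb, show K/2+K/2 = K by ring, hKdef, Real.rpow_natCast]
  have hB0 : 0 < 1+(K+1)*x := by
    have : 0 ≤ (K+1)*x := by positivity
    linarith
  have hA0 : 0 < x+(K+1) := by linarith
  have hA20 : 0 < (x+(K+1))/x := by positivity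
  rw [ht'2, show 1+(K+1)*(1/x) = (x+(K+1))/x by first | (field_simp; ring) | field_simp] at hP2
  have hP1pos : 0 ≤ P (k+2) y := by
    rw [hP1]; positivity
  have hP2pos : 0 ≤ P (k+2) (-y) := by
    rw [hP2]; positivity
  have hP1sq : (P (k+2) y)^2 = x^(k+1)/(1+(K+1)*x)^k := by
    rw [hP1, div_pow, hsq _ hB0, ← pow_mul, show (k+1)*2 = 2*(k+1) by ring, pow_mul, ← hxdef]
  have hP2sq : (P (k+2) (-y))^2 = 1/(x*(x+(K+1))^k) := by
    rw [hP2, div_pow, hsq _ hA20, ← pow_mul, show (k+1)*2 = 2*(k+1) by ring, pow_mul, ht'2]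
    rw [div_pow, div_pow, one_pow, pow_succ]
    field_simp
  have hprod : (1+(K+1)*x)*((x+(K+1))/x) = (K+2)^2 + (K+1)*d^2/x := by
    rw [hxd]; field_simp; ring
  have hcross : P (k+2) y * P (k+2) (-y) ≤ 1/(K+2)^k := by
    rw [hP1, hP2, div_mul_div_comm, ← mul_pow, htt', one_pow,
      ← Real.mul_rpow (le_of_lt hB0) (le_of_lt hA20), hprod]
    have hrge : ((K+2)^2:ℝ) ≤ (K+2)^2 + (K+1)*d^2/x := by
      have : 0 ≤ (K+1)*d^2/x := by positivity
      linarith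
    have hrpow : ((K+2)^2:ℝ)^(K/2) ≤ ((K+2)^2 + (K+1)*d^2/x)^(K/2) :=
      Real.rpow_le_rpow (by positivity) hrge (by positivity)
    have hbase : ((K+2)^2:ℝ)^(K/2) = (K+2)^k := by
      rw [← Real.rpow_natCast (K+2) 2, ← Real.rpow_mul (by linarith : (0:ℝ) ≤ K+2),
        show ((2:ℕ):ℝ)*(K/2) = K by push_cast; ring, hKdef, Real.rpow_natCast]
    rw [← hbase]
    apply one_div_le_one_div_of_le (by positivity) hrpow
  have hLHS : (P (k+2) y + P (k+2) (-y))^2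
      ≤ x^(k+1)/(1+(K+1)*x)^k + 2*(1/(K+2)^k) + 1/(x*(x+(K+1))^k) := by
    have hsum : (P (k+2) y + P (k+2) (-y))^2
        = (P (k+2) y)^2 + 2*(P (k+2) y * P (k+2) (-y)) + (P (k+2) (-y))^2 := by ring
    rw [hsum, hP1sq, hP2sq]
    linarith [hcross]
  have hgoalRHS : 4 / ((k+2:ℕ) : ℝ) ^ (k+2-2) *
        (1 + (((k+2:ℕ) : ℝ) - 1) * (3 * ((k+2:ℕ) : ℝ) - 2) / ((k+2:ℕ) : ℝ) ^ 2 * y ^ 2)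
      = 4/(K+2)^k * (1 + (K+1)*(3*K+4)/(K+2)^2 * (d^2/(4*(1+d)))) := by
    rw [hcast, show k+2-2 = k from rfl, hy2, hxd]
    ring
  rw [hgoalRHS]
  have hmid : x^(k+1)/(1+(K+1)*x)^k + 2*(1/(K+2)^k) + 1/(x*(x+(K+1))^k)
      = (1+d)^(k+1)/((K+2)+(K+1)*d)^k + 2*(1/(K+2)^k) + 1/((1+d)*((K+2)+d)^k) := by
    rw [hxd]; ring
  have hfin := final_step k d hd
  rw [← hKdef] at hfin
  calc (P (k+2) y + P (k+2) (-y))^2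
      ≤ x^(k+1)/(1+(K+1)*x)^k + 2*(1/(K+2)^k) + 1/(x*(x+(K+1))^k) := hLHS
    _ = (1+d)^(k+1)/((K+2)+(K+1)*d)^k + 2*(1/(K+2)^k) + 1/((1+d)*((K+2)+d)^k) := hmid
    _ ≤ 4/(K+2)^k * (1 + (K+1)*(3*K+4)/(K+2)^2 * (d^2/(4*(1+d)))) := hfin
end
end
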